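/- arXiv:2003.08762 — 4 statements merged into one kernel-verified Lean document; each statement's English description precedes it below -/
import Mathlib

section
/- Let K ⊆ X be a nonempty compact T-invariant set and define f : X → ℝ by f(x) := -inf_{y ∈ K} d(x,y). Then f is continuous, β(f) = 0, and the maximising measures of f are precisely the T-invariant Borel probability measures supported on K; that is, for μ ∈ M_T one has ∫ f dμ = β(f) if and only if μ(K) = 1. -/
open MeasureTheory

variable {X : Type*} [MetricSpace X] [CompactSpace X] [MeasurableSpace X] [BorelSpace X]

section AuxKB

open Topology MeasureTheory BoundedContinuousFunction NNReal ENNReal Set TopologicalSpace Filter Metric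

set_option maxHeartbeats 2000000 in
theorem exists_invariant_prob (T : X → X) (hT : Continuous T)
    (K : Set X) (hKne : K.Nonempty) (hK : IsCompact K) (hKinv : Set.MapsTo T K K) :
    ∃ μ : Measure X, IsProbabilityMeasure μ ∧ MeasurePreserving T μ μ ∧ μ K = 1 := by
  classical
  obtain ⟨x₀, hx₀⟩ := hKne
  have horb : ∀ n, T^[n] x₀ ∈ K := by
    intro n
    induction n with
    | zero => exact hx₀
    | succ n ih => rw [Function.iterate_succ_apply']; exact hKinv ih
  -- pointwise bound for bounded continuous functions
  have hbnd : ∀ g : X →ᵇ ℝ≥0, ∃ C : ℝ≥0, ∀ x, g x ≤ C := by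
    intro g
    obtain ⟨z, -, hz⟩ := isCompact_univ.exists_isMaxOn ⟨x₀, trivial⟩
      (g.continuous.continuousOn)
    exact ⟨g z, fun x => hz (Set.mem_univ x)⟩
  choose bnd hbnd using hbnd
  set a : ℕ → (X →ᵇ ℝ≥0) → ℝ≥0 :=
    fun n g => (∑ i ∈ Finset.range (n + 1), g (T^[i] x₀)) / (n + 1) with ha
  have hbound : ∀ (n : ℕ) (g : X →ᵇ ℝ≥0), a n g ≤ bnd g := by
    intro n g
    rw [ha, div_le_iff₀ (by positivity : (0:ℝ≥0) < (n : ℝ≥0) + 1)]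
    calc ∑ i ∈ Finset.range (n + 1), g (T^[i] x₀)
        ≤ ∑ _i ∈ Finset.range (n + 1), bnd g :=
          Finset.sum_le_sum fun i _ => hbnd g _
      _ = bnd g * ((n : ℝ≥0) + 1) := by
          simp [Finset.sum_const, mul_comm]
  -- ultrafilter limit functional
  set U : Ultrafilter ℕ := Ultrafilter.of atTop with hUdef
  have hU : (U : Filter ℕ) ≤ atTop := Ultrafilter.of_le _
  have hlim : ∀ g : X →ᵇ ℝ≥0, ∃ l, Tendsto (fun n => a n g) (U : Filter ℕ) (𝓝 l) := by
    intro g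
    have hc : IsCompact (Set.Icc (0 : ℝ≥0) (bnd g)) := isCompact_Icc
    have hmem : ∀ n, a n g ∈ Set.Icc (0 : ℝ≥0) (bnd g) :=
      fun n => ⟨zero_le, hbound n g⟩
    obtain ⟨l, -, hl⟩ := hc.ultrafilter_le_nhds (U.map fun n => a n g)
      (by
        rw [le_principal_iff, Ultrafilter.mem_coe, Ultrafilter.mem_map]
        exact Filter.univ_mem' hmem)
    exact ⟨l, hl⟩
  choose Λ hΛ using hlim
  -- properties of Λ
  have hadd : ∀ g h : X →ᵇ ℝ≥0, Λ (g + h) = Λ g + Λ h := by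
    intro g h
    have h1 : (fun n => a n (g + h)) = fun n => a n g + a n h := by
      funext n
      simp only [ha, BoundedContinuousFunction.coe_add, Pi.add_apply,
        Finset.sum_add_distrib, add_div]
    exact tendsto_nhds_unique (hΛ (g + h)) (h1 ▸ ((hΛ g).add (hΛ h)))
  have hsmul : ∀ (c : ℝ≥0) (g : X →ᵇ ℝ≥0), Λ (c • g) = c * Λ g := by
    intro c g
    have h1 : (fun n => a n (c • g)) = fun n => c * a n g := by
      funext n
      simp only [ha, BoundedContinuousFunction.coe_smul, Pi.smul_apply, smul_eq_mul,
        ← Finset.mul_sum, mul_div_assoc]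
    exact tendsto_nhds_unique (hΛ (c • g)) (h1 ▸ (tendsto_const_nhds.mul (hΛ g)))
  have hmono : ∀ g h : X →ᵇ ℝ≥0, (∀ x, g x ≤ h x) → Λ g ≤ Λ h := by
    intro g h hgh
    refine le_of_tendsto_of_tendsto (hΛ g) (hΛ h) (Filter.Eventually.of_forall fun n => ?_)
    simp only [ha]
    gcongr
    exact hgh _
  have hdiv0 : ∀ c : ℝ≥0, Tendsto (fun n : ℕ => c / ((n : ℝ≥0) + 1)) (U : Filter ℕ) (𝓝 0) := by
    intro c
    refine Filter.Tendsto.mono_left ?_ hU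
    rw [← NNReal.tendsto_coe]
    have h1 := (tendsto_const_div_atTop_nhds_zero_nat (c : ℝ)).comp (tendsto_add_atTop_nat 1)
    simp only [Function.comp_def] at h1
    convert h1 using 2 with n
    push_cast
    ring
    simp
  have hone : Λ 1 = 1 := by
    have h1 : ∀ n, a n (1 : X →ᵇ ℝ≥0) = 1 := by
      intro n
      have : ((n : ℝ≥0) + 1) ≠ 0 := by positivity
      simp [ha, Finset.sum_const, div_self this]
    exact (tendsto_nhds_unique (tendsto_const_nhds.congr fun n => (h1 n).symm) (hΛ 1)).symm
  have hvanish : ∀ g : X →ᵇ ℝ≥0, (∀ x ∈ K, g x = 0) → Λ g = 0 := by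
    intro g hg
    have h1 : ∀ n, a n g = 0 := by
      intro n
      simp only [ha]
      rw [Finset.sum_congr rfl fun i _ => hg _ (horb i)]
      simp
    exact (tendsto_nhds_unique (tendsto_const_nhds.congr fun n => (h1 n).symm) (hΛ g)).symm
  have hcomp : ∀ g : X →ᵇ ℝ≥0, Λ (g.compContinuous (⟨T, hT⟩ : C(X, X))) = Λ g := by
    intro g
    set g' := g.compContinuous (⟨T, hT⟩ : C(X, X)) with hg'
    have l : ∀ i, g' (T^[i] x₀) = g (T^[i + 1] x₀) := by
      intro i
      rw [Function.iterate_succ_apply']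
      rfl
    have key : ∀ n, a n g' + g x₀ / ((n : ℝ≥0) + 1)
        = a n g + g (T^[n + 1] x₀) / ((n : ℝ≥0) + 1) := by
      intro n
      simp only [ha, ← add_div]
      congr 1
      calc (∑ i ∈ Finset.range (n + 1), g' (T^[i] x₀)) + g x₀
          = (∑ i ∈ Finset.range (n + 1), g (T^[i + 1] x₀)) + g (T^[0] x₀) := by
            rw [Finset.sum_congr rfl fun i _ => l i]
            rfl
        _ = ∑ i ∈ Finset.range (n + 1 + 1), g (T^[i] x₀) :=
            (Finset.sum_range_succ' (fun i => g (T^[i] x₀)) (n + 1)).symm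
        _ = (∑ i ∈ Finset.range (n + 1), g (T^[i] x₀)) + g (T^[n + 1] x₀) :=
            Finset.sum_range_succ _ (n + 1)
    have t1 : Tendsto (fun n => a n g' + g x₀ / ((n : ℝ≥0) + 1)) (U : Filter ℕ)
        (𝓝 (Λ g' + 0)) := (hΛ g').add (hdiv0 _)
    have t2 : Tendsto (fun n => a n g + g (T^[n + 1] x₀) / ((n : ℝ≥0) + 1)) (U : Filter ℕ)
        (𝓝 (Λ g + 0)) := by
      refine (hΛ g).add ?_
      refine tendsto_of_tendsto_of_tendsto_of_le_of_le tendsto_const_nhds (hdiv0 (bnd g))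
        (fun n => zero_le) (fun n => ?_)
      gcongr
      exact hbnd g _
    have := tendsto_nhds_unique (t1.congr key) t2
    simpa using this
  set ΛL : CompactlySupportedContinuousMap X ℝ≥0 →ₗ[ℝ≥0] ℝ≥0 :=
    { toFun := fun f => Λ (f : X →ᵇ ℝ≥0)
      map_add' := fun f g => by rw [← hadd]; congr 1
      map_smul' := fun c g => by
        rw [RingHom.id_apply, smul_eq_mul, ← hsmul]; congr 1 } with hΛL
  let ι : (X →ᵇ ℝ≥0) → CompactlySupportedContinuousMap X ℝ≥0 := fun g =>
    CompactlySupportedContinuousMap.continuousMapEquiv g.toContinuousMap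
  have hΛLapp : ∀ g, ΛL g = Λ g := fun g => rfl
  -- Urysohn-type functions valued in ℝ≥0
  have urysohn : ∀ A B : Set X, IsClosed A → IsClosed B → Disjoint A B →
      ∃ v : X →ᵇ ℝ≥0, (∀ x ∈ A, v x = 0) ∧ (∀ x ∈ B, v x = 1) ∧ (∀ x, v x ≤ 1) := by
    intro A B hA hB hAB
    obtain ⟨u, hu0, hu1, hu01⟩ := exists_continuous_zero_one_of_isClosed hA hB hAB
    refine ⟨mkOfCompact ⟨fun x => (u x).toNNReal,
      continuous_real_toNNReal.comp u.continuous⟩, ?_, ?_, ?_⟩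
    · intro x hx
      simp [mkOfCompact_apply, hu0 hx]
    · intro x hx
      simp [mkOfCompact_apply, hu1 hx]
    · intro x
      simp only [mkOfCompact_apply, ContinuousMap.coe_mk]
      exact Real.toNNReal_le_one.mpr (hu01 x).2
  -- disjoint additivity of the Riesz content
  have hdisj : ∀ K1 K2 : Compacts X, Disjoint (K1 : Set X) K2 →
      rieszContentAux ΛL (K1 ⊔ K2) = rieszContentAux ΛL K1 + rieszContentAux ΛL K2 := by
    intro K1 K2 hd
    refine le_antisymm (rieszContentAux_sup_le ΛL K1 K2) ?_
    refine le_csInf (rieszContentAux_image_nonempty ΛL (K1 ⊔ K2)) ?_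
    rintro b ⟨f, hf, rfl⟩
    obtain ⟨v, hv0, hv1, hv01⟩ := urysohn K1 K2 K1.2.isClosed K2.2.isClosed hd
    set h₁ : X →ᵇ ℝ≥0 := mkOfCompact ⟨fun x => f x * (1 - v x),
      (f.continuous.mul (continuous_const.sub v.continuous))⟩ with hh₁
    set h₂ : X →ᵇ ℝ≥0 := mkOfCompact ⟨fun x => f x * v x,
      (f.continuous.mul v.continuous)⟩ with hh₂
    have hsum : h₁ + h₂ = f := by
      ext x
      simp only [BoundedContinuousFunction.coe_add, Pi.add_apply, hh₁, hh₂,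
        mkOfCompact_apply, ContinuousMap.coe_mk]
      rw [← mul_add, tsub_add_cancel_of_le (hv01 x), mul_one]
      rfl
    have h1K1 : ∀ x ∈ K1, (1 : ℝ≥0) ≤ h₁ x := by
      intro x hx
      have : h₁ x = f x := by
        simp [hh₁, mkOfCompact_apply, hv0 x hx]
      rw [this]
      exact hf x (Set.mem_union_left _ hx)
    have h2K2 : ∀ x ∈ K2, (1 : ℝ≥0) ≤ h₂ x := by
      intro x hx
      have : h₂ x = f x := by
        simp [hh₂, mkOfCompact_apply, hv1 x hx]
      rw [this]
      exact hf x (Set.mem_union_right _ hx)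
    calc rieszContentAux ΛL K1 + rieszContentAux ΛL K2
        ≤ ΛL (ι h₁) + ΛL (ι h₂) := add_le_add (rieszContentAux_le ΛL (f := ι h₁) h1K1)
          (rieszContentAux_le ΛL (f := ι h₂) h2K2)
      _ = Λ (h₁ + h₂) := (hadd h₁ h₂).symm
      _ = ΛL f := by rw [hsum]; rfl
  set C : Content X :=
    { toFun := fun D => (rieszContentAux ΛL D : ℝ≥0)
      mono' := fun K1 K2 h => rieszContentAux_mono ΛL h
      sup_disjoint' := fun K1 K2 h _ _ => hdisj K1 K2 h
      sup_le' := fun K1 K2 => rieszContentAux_sup_le ΛL K1 K2 } with hC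
  set μ : Measure X := C.measure with hμ
  -- the content of the whole space is 1
  have hlamuniv : rieszContentAux ΛL ⟨Set.univ, isCompact_univ⟩ = 1 := by
    refine le_antisymm ?_ ?_
    · have := rieszContentAux_le ΛL (K := ⟨Set.univ, isCompact_univ⟩) (f := ι 1)
        (fun x _ => le_refl 1)
      exact this.trans_eq hone
    · refine le_csInf (rieszContentAux_image_nonempty ΛL _) ?_
      rintro b ⟨f, hf, rfl⟩
      calc (1 : ℝ≥0) = Λ 1 := hone.symm
        _ ≤ Λ f := hmono 1 f fun x => by simpa using hf x trivial
  have hopen_apply : ∀ (V : Set X) (hV : IsOpen V), μ V = C.innerContent ⟨V, hV⟩ := by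
    intro V hV
    rw [hμ, C.measure_apply hV.measurableSet]
    exact C.outerMeasure_opens ⟨V, hV⟩
  have hμuniv : μ Set.univ = 1 := by
    rw [hopen_apply Set.univ isOpen_univ, C.innerContent_of_isCompact isCompact_univ isOpen_univ]
    rw [hC, Content.mk_apply]
    simp [hC, hlamuniv]
  -- μ gives full mass to K
  have hKc : μ Kᶜ = 0 := by
    rw [hopen_apply Kᶜ hK.isClosed.isOpen_compl]
    refine le_antisymm ?_ (zero_le)
    rw [Content.innerContent]
    refine iSup_le fun D => iSup_le fun hD => ?_
    obtain ⟨v, hv0, hv1, hv01⟩ := urysohn K D hK.isClosed D.2.isClosed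
      (Set.disjoint_left.mpr fun x hx hxD => hD hxD hx)
    have h1 : rieszContentAux ΛL D ≤ ΛL (ι v) :=
      rieszContentAux_le ΛL (f := ι v) fun x hx => le_of_eq (hv1 x hx).symm
    have h2 : ΛL (ι v) = 0 := hvanish v hv0
    rw [hC, Content.mk_apply]
    have : rieszContentAux ΛL D = 0 := le_antisymm (h2 ▸ h1) (zero_le)
    simp [hC, this]
  have hμK : μ K = 1 := by
    have h := measure_add_measure_compl (μ := μ) hK.isClosed.measurableSet
    rw [hKc, add_zero, hμuniv] at h
    exact h
  -- invariance
  have hpre : ∀ (V : Set X) (hV : IsOpen V), μ (T ⁻¹' V) ≤ μ V := by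
    intro V hV
    rw [hopen_apply _ (hV.preimage hT), hopen_apply V hV]
    simp only [Content.innerContent]
    refine iSup_le fun D => iSup_le fun hD => ?_
    have hsub : T '' ↑D ⊆ V := Set.image_subset_iff.mpr hD
    have hle : rieszContentAux ΛL D ≤ rieszContentAux ΛL ⟨T '' ↑D, D.2.image hT⟩ := by
      refine le_csInf (rieszContentAux_image_nonempty ΛL _) ?_
      rintro b ⟨f, hf, rfl⟩
      have hge : ∀ x ∈ D, (1 : ℝ≥0) ≤ ((f : X →ᵇ ℝ≥0).compContinuous (⟨T, hT⟩ : C(X, X))) x :=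
        fun x hx => hf _ (Set.mem_image_of_mem T hx)
      calc rieszContentAux ΛL D ≤ ΛL (ι ((f : X →ᵇ ℝ≥0).compContinuous (⟨T, hT⟩ : C(X, X)))) :=
            rieszContentAux_le ΛL (f := ι _) hge
        _ = ΛL f := hcomp f
    refine le_trans ?_ (le_iSup₂_of_le (⟨T '' ↑D, D.2.image hT⟩ : Compacts X) hsub le_rfl)
    exact ENNReal.coe_le_coe.mpr hle
  haveI hOR : μ.OuterRegular := by rw [hμ]; exact C.outerRegular
  have hpre' : ∀ s : Set X, μ (T ⁻¹' s) ≤ μ s := by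
    intro s
    have hs := Set.measure_eq_iInf_isOpen s μ
    rw [hs]
    refine le_iInf fun V => le_iInf fun hsV => le_iInf fun hV => ?_
    exact le_trans (measure_mono (Set.preimage_mono hsV)) (hpre V hV)
  have hmap : Measure.map T μ = μ := by
    refine Measure.ext fun s hs => ?_
    rw [Measure.map_apply hT.measurable hs]
    refine le_antisymm (hpre' s) ?_
    have e1 : μ (T ⁻¹' s) + μ (T ⁻¹' sᶜ) = 1 := by
      have := measure_add_measure_compl (μ := μ) (hs.preimage hT.measurable)
      rw [hμuniv] at this
      rw [Set.preimage_compl]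
      exact this
    have e2 : μ s + μ sᶜ = 1 := by
      have := measure_add_measure_compl (μ := μ) hs
      rw [hμuniv] at this
      exact this
    have hb'top : μ (T ⁻¹' sᶜ) ≠ ⊤ := by
      have : μ (T ⁻¹' sᶜ) ≤ 1 := e1 ▸ le_add_self
      exact (lt_of_le_of_lt this ENNReal.one_lt_top).ne
    have hbtop : μ sᶜ ≠ ⊤ := by
      have : μ sᶜ ≤ 1 := e2 ▸ le_add_self
      exact (lt_of_le_of_lt this ENNReal.one_lt_top).ne
    have ha' : μ (T ⁻¹' s) = 1 - μ (T ⁻¹' sᶜ) := ENNReal.eq_sub_of_add_eq hb'top e1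
    have ha : μ s = 1 - μ sᶜ := ENNReal.eq_sub_of_add_eq hbtop e2
    rw [ha, ha']
    exact tsub_le_tsub_left (hpre' sᶜ) 1
  exact ⟨μ, ⟨hμuniv⟩, ⟨hT.measurable, hmap⟩, hμK⟩


end AuxKB

/-- The set of `T`-invariant Borel probability measures on `X`. -/
def invMeasures (T : X → X) : Set (ProbabilityMeasure X) :=
  {μ | MeasurePreserving T (μ : Measure X) (μ : Measure X)}

/-- `beta T f = sup_{μ ∈ M_T} ∫ f dμ`. -/
noncomputable def beta (T : X → X) (f : X → ℝ) : ℝ :=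
  sSup ((fun μ : ProbabilityMeasure X => ∫ x, f x ∂(μ : Measure X)) '' invMeasures T)

/-- The set of maximising measures of `f`. -/
def Mmax (T : X → X) (f : X → ℝ) : Set (ProbabilityMeasure X) :=
  {μ | μ ∈ invMeasures T ∧ ∫ x, f x ∂(μ : Measure X) = beta T f}

/-- The set of integrals of `g` against the maximising measures of `f`. -/
noncomputable def maxInts (T : X → X) (f g : X → ℝ) : Set ℝ :=
  (fun μ : ProbabilityMeasure X => ∫ x, g x ∂(μ : Measure X)) '' Mmax T f

theorem stmt1 [Nonempty X] (T : X → X) (hT : Continuous T)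
    (K : Set X) (hKne : K.Nonempty) (hK : IsCompact K) (hKinv : Set.MapsTo T K K) :
    Continuous (fun x : X => -Metric.infDist x K) ∧
    beta T (fun x : X => -Metric.infDist x K) = 0 ∧
    ∀ μ ∈ invMeasures T,
      ((∫ x, (-Metric.infDist x K) ∂(μ : Measure X)
          = beta T (fun x : X => -Metric.infDist x K)) ↔ (μ : Measure X) K = 1) := by
  have hfc : Continuous (fun x : X => -Metric.infDist x K) :=
    (Metric.continuous_infDist_pt (s := K)).neg
  obtain ⟨m, hmprob, hminv, hmK⟩ := exists_invariant_prob T hT K hKne hK hKinv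
  set P : ProbabilityMeasure X := ⟨m, hmprob⟩ with hP
  have hPinv : P ∈ invMeasures T := hminv
  have hint : ∀ ν : ProbabilityMeasure X,
      Integrable (fun x : X => -Metric.infDist x K) (ν : Measure X) :=
    fun ν => hfc.integrable_of_hasCompactSupport (HasCompactSupport.of_compactSpace _)
  have hnonpos : ∀ ν : ProbabilityMeasure X,
      ∫ x, -Metric.infDist x K ∂(ν : Measure X) ≤ 0 :=
    fun ν => integral_nonpos fun x => neg_nonpos.mpr Metric.infDist_nonneg
  -- measures supported on K integrate f to 0
  have hsupp : ∀ ν : ProbabilityMeasure X, (ν : Measure X) K = 1 →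
      ∫ x, -Metric.infDist x K ∂(ν : Measure X) = 0 := by
    intro ν hν
    have hνc : (ν : Measure X) Kᶜ = 0 :=
      (prob_compl_eq_zero_iff hK.isClosed.measurableSet).mpr hν
    have hae : (fun x : X => -Metric.infDist x K) =ᵐ[(ν : Measure X)] 0 := by
      rw [Filter.EventuallyEq, ae_iff]
      refine measure_mono_null ?_ hνc
      intro x hx
      simp only [Set.mem_setOf_eq, Pi.zero_apply] at hx
      intro hxK
      exact hx (by rw [Metric.infDist_zero_of_mem hxK, neg_zero])
    rw [integral_congr_ae hae]
    simp
  have hPint : ∫ x, -Metric.infDist x K ∂(P : Measure X) = 0 := hsupp P hmK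
  have hβ : beta T (fun x : X => -Metric.infDist x K) = 0 := by
    refine le_antisymm (Real.sSup_le ?_ le_rfl) ?_
    · rintro y ⟨ν, -, rfl⟩
      exact hnonpos ν
    · refine le_csSup ⟨0, ?_⟩ ⟨P, hPinv, hPint⟩
      rintro y ⟨ν, -, rfl⟩
      exact hnonpos ν
  refine ⟨hfc, hβ, fun ν hν => ?_⟩
  rw [hβ]
  constructor
  · intro hi
    have hgint : Integrable (fun x : X => Metric.infDist x K) (ν : Measure X) :=
      (Metric.continuous_infDist_pt (s := K)).integrable_of_hasCompactSupport
        (HasCompactSupport.of_compactSpace _)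
    have hgzero : ∫ x, Metric.infDist x K ∂(ν : Measure X) = 0 := by
      have := integral_neg (μ := (ν : Measure X)) (fun x : X => Metric.infDist x K)
      rw [hi] at this
      linarith [this]
    have hae := (integral_eq_zero_iff_of_nonneg
      (fun x => Metric.infDist_nonneg) hgint).mp hgzero
    rw [Filter.EventuallyEq, ae_iff] at hae
    have hνc : (ν : Measure X) Kᶜ = 0 := by
      refine measure_mono_null ?_ hae
      intro x hx
      simp only [Set.mem_compl_iff] at hx
      simp only [Set.mem_setOf_eq, Pi.zero_apply]
      exact ((hK.isClosed.notMem_iff_infDist_pos hKne).mp hx).ne'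
    exact (prob_compl_eq_zero_iff hK.isClosed.measurableSet).mp hνc
  · exact hsupp ν
end

section
/- For all continuous functions f, g : X → ℝ, one has limsup_{τ → 0⁺} sup_{μ ∈ M_max(f + τ·g)} ∫ g dμ ≤ sup_{μ ∈ M_max(f)} ∫ g dμ. -/
open MeasureTheory

variable {X : Type*} [MetricSpace X] [CompactSpace X] [MeasurableSpace X] [BorelSpace X]

section Stmt7Aux

open Topology Filter TopologicalSpace Set
open scoped NNReal ENNReal

variable [Nonempty X]

/-- Continuous functions on a compact space are integrable. -/
lemma aux_int (h : C(X, ℝ)) (μ : Measure X) [IsFiniteMeasure μ] : Integrable h μ :=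
  h.continuous.integrable_of_hasCompactSupport (IsClosed.isCompact (isClosed_tsupport _))

/-- Integral against a probability measure is bounded by the sup norm. -/
lemma aux_bound (h : C(X, ℝ)) (μ : Measure X) [IsProbabilityMeasure μ] :
    |∫ x, h x ∂μ| ≤ ‖h‖ := by
  rw [← Real.norm_eq_abs]
  calc ‖∫ x, h x ∂μ‖ ≤ ‖h‖ * (μ Set.univ).toReal :=
        norm_integral_le_of_norm_le_const (Eventually.of_forall fun x => h.norm_coe_le_norm x)
    _ = ‖h‖ := by simp

/-- Weak-* sequential compactness of the space of Borel probability measures on a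
compact metric space. -/
lemma aux_cluster (μ : ℕ → ProbabilityMeasure X) :
    ∃ ν : ProbabilityMeasure X, ∃ ψ : ℕ → ℕ, StrictMono ψ ∧
      Tendsto (fun k => μ (ψ k)) atTop (𝓝 ν) := by
  haveI : SeparableSpace X := isSeparable_univ_iff.mp (isCompact_univ.isSeparable)
  -- a dense sequence of continuous functions
  obtain ⟨u, hu⟩ := TopologicalSpace.exists_dense_seq C(X, ℝ)
  -- diagonal-type subsequence extraction via compactness of a product of intervals
  have hScomp : IsCompact (Set.univ.pi (fun j : ℕ => Set.Icc (-‖u j‖) ‖u j‖)) :=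
    isCompact_univ_pi (fun j => isCompact_Icc)
  have hmem : ∀ n, (fun j => ∫ x, u j x ∂(μ n : Measure X)) ∈
      Set.univ.pi (fun j : ℕ => Set.Icc (-‖u j‖) ‖u j‖) := by
    intro n j _
    exact abs_le.mp (aux_bound (u j) (μ n : Measure X))
  obtain ⟨L, _, ψ, hψ, hconv⟩ := hScomp.isSeqCompact hmem
  rw [tendsto_pi_nhds] at hconv
  -- limits of integrals exist for every continuous function
  have key : ∀ h : C(X, ℝ), ∃ l : ℝ,
      Tendsto (fun k => ∫ x, h x ∂(μ (ψ k) : Measure X)) atTop (𝓝 l) := by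
    intro h
    have cauchy : CauchySeq (fun k => ∫ x, h x ∂(μ (ψ k) : Measure X)) := by
      rw [Metric.cauchySeq_iff]
      intro ε hε
      obtain ⟨j, hj⟩ : ∃ j, dist (u j) h < ε / 3 := by
        have hcl : h ∈ closure (Set.range u) := by rw [hu.closure_range]; trivial
        obtain ⟨_, ⟨j, rfl⟩, hd⟩ := Metric.mem_closure_iff.mp hcl (ε / 3) (by linarith)
        exact ⟨j, by rwa [dist_comm]⟩
      have hc : CauchySeq (fun k => ((fun n => fun j => ∫ x, u j x ∂(μ n : Measure X)) ∘ ψ) k j) :=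
        (hconv j).cauchySeq
      rw [Metric.cauchySeq_iff] at hc
      obtain ⟨N, hN⟩ := hc (ε / 3) (by linarith)
      refine ⟨N, fun a ha b hb => ?_⟩
      have est : ∀ c : ℕ, dist (∫ x, h x ∂(μ (ψ c) : Measure X))
          (∫ x, u j x ∂(μ (ψ c) : Measure X)) ≤ dist (u j) h := by
        intro c
        rw [Real.dist_eq, ← integral_sub (aux_int h _) (aux_int (u j) _)]
        have : ∀ x, h x - u j x = (h - u j) x := fun x => by simp
        simp_rw [this]
        calc |∫ x, (h - u j) x ∂(μ (ψ c) : Measure X)| ≤ ‖h - u j‖ :=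
              aux_bound (h - u j) (μ (ψ c) : Measure X)
          _ = dist (u j) h := by rw [dist_eq_norm, ← norm_neg]; congr 1; abel
      have hab := hN a ha b hb
      have hd1 : dist (∫ x, h x ∂(μ (ψ a) : Measure X)) (∫ x, u j x ∂(μ (ψ a) : Measure X))
          < ε / 3 := lt_of_le_of_lt (est a) hj
      have hd3 : dist (∫ x, u j x ∂(μ (ψ b) : Measure X)) (∫ x, h x ∂(μ (ψ b) : Measure X))
          < ε / 3 := by rw [dist_comm]; exact lt_of_le_of_lt (est b) hj
      calc dist (∫ x, h x ∂(μ (ψ a) : Measure X)) (∫ x, h x ∂(μ (ψ b) : Measure X))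
          ≤ dist (∫ x, h x ∂(μ (ψ a) : Measure X)) (∫ x, u j x ∂(μ (ψ a) : Measure X))
            + dist (∫ x, u j x ∂(μ (ψ a) : Measure X)) (∫ x, u j x ∂(μ (ψ b) : Measure X))
            + dist (∫ x, u j x ∂(μ (ψ b) : Measure X)) (∫ x, h x ∂(μ (ψ b) : Measure X)) :=
            dist_triangle4 _ _ _ _
        _ < ε := by
            have hd2 : dist (∫ x, u j x ∂(μ (ψ a) : Measure X))
                (∫ x, u j x ∂(μ (ψ b) : Measure X)) < ε / 3 := hab
            linarith
    exact cauchySeq_tendsto_of_complete cauchy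
  choose Lam hLam using key
  -- properties of the limit functional
  have lam_nonneg : ∀ h : C(X, ℝ), (∀ x, 0 ≤ h x) → 0 ≤ Lam h := fun h hh =>
    ge_of_tendsto (hLam h) (Eventually.of_forall fun k => integral_nonneg hh)
  have lam_mono : ∀ h₁ h₂ : C(X, ℝ), (∀ x, h₁ x ≤ h₂ x) → Lam h₁ ≤ Lam h₂ := fun h₁ h₂ hle =>
    le_of_tendsto_of_tendsto' (hLam h₁) (hLam h₂)
      (fun k => integral_mono (aux_int h₁ _) (aux_int h₂ _) hle)
  have lam_one : Lam 1 = 1 := by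
    have h1 : (fun k => ∫ x, (1 : C(X, ℝ)) x ∂(μ (ψ k) : Measure X)) = fun _ => (1 : ℝ) := by
      funext k; simp
    exact tendsto_nhds_unique (hLam 1) (by rw [h1]; exact tendsto_const_nhds)
  have lam_add : ∀ h₁ h₂ : C(X, ℝ), Lam (h₁ + h₂) = Lam h₁ + Lam h₂ := by
    intro h₁ h₂
    have e : (fun k => ∫ x, (h₁ + h₂) x ∂(μ (ψ k) : Measure X))
        = fun k => (∫ x, h₁ x ∂(μ (ψ k) : Measure X)) + ∫ x, h₂ x ∂(μ (ψ k) : Measure X) := by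
      funext k
      simp only [ContinuousMap.add_apply]
      exact integral_add (aux_int h₁ _) (aux_int h₂ _)
    exact tendsto_nhds_unique (hLam (h₁ + h₂)) (e ▸ ((hLam h₁).add (hLam h₂)))
  -- the Riesz-type content
  set tset : Set X → Set ℝ := fun K =>
    {r | ∃ φ : C(X, ℝ), (∀ x, 0 ≤ φ x) ∧ (∀ x ∈ K, 1 ≤ φ x) ∧ Lam φ = r} with htset
  have tset_ne : ∀ K, (tset K).Nonempty := fun K =>
    ⟨Lam 1, 1, fun x => by simp, fun x _ => by simp, rfl⟩
  have tset_bdd : ∀ K, ∀ r ∈ tset K, 0 ≤ r := by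
    rintro K r ⟨φ, hφ0, _, rfl⟩
    exact lam_nonneg φ hφ0
  have tset_bddBelow : ∀ K, BddBelow (tset K) := fun K => ⟨0, fun r hr => tset_bdd K r hr⟩
  set lamInf : Set X → ℝ := fun K => sInf (tset K) with hlamInf
  have lamInf_nonneg : ∀ K, 0 ≤ lamInf K := fun K => le_csInf (tset_ne K) (tset_bdd K)
  have lamInf_mono : ∀ K₁ K₂ : Set X, K₁ ⊆ K₂ → lamInf K₁ ≤ lamInf K₂ := by
    intro K₁ K₂ hsub
    refine csInf_le_csInf (tset_bddBelow K₁) (tset_ne K₂) ?_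
    rintro r ⟨φ, hφ0, hφ1, rfl⟩
    exact ⟨φ, hφ0, fun x hx => hφ1 x (hsub hx), rfl⟩
  have lamInf_le : ∀ (K : Set X) (φ : C(X, ℝ)), (∀ x, 0 ≤ φ x) → (∀ x ∈ K, 1 ≤ φ x) →
      lamInf K ≤ Lam φ := fun K φ h1 h2 => csInf_le (tset_bddBelow K) ⟨φ, h1, h2, rfl⟩
  have lamInf_union_le : ∀ K₁ K₂ : Set X, lamInf (K₁ ∪ K₂) ≤ lamInf K₁ + lamInf K₂ := by
    intro K₁ K₂
    have step : ∀ a ∈ tset K₁, ∀ b ∈ tset K₂, lamInf (K₁ ∪ K₂) ≤ a + b := by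
      rintro a ⟨φ₁, h1a, h1b, rfl⟩ b ⟨φ₂, h2a, h2b, rfl⟩
      have hle := lamInf_le (K₁ ∪ K₂) (φ₁ + φ₂)
        (fun x => by simpa using add_nonneg (h1a x) (h2a x))
        (fun x hx => by
          simp only [ContinuousMap.add_apply]
          rcases hx with hx | hx
          · exact le_add_of_le_of_nonneg (h1b x hx) (h2a x)
          · exact le_add_of_nonneg_of_le (h1a x) (h2b x hx))
      rwa [lam_add] at hle
    have h2 : ∀ a ∈ tset K₁, lamInf (K₁ ∪ K₂) - a ≤ lamInf K₂ := fun a ha =>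
      le_csInf (tset_ne K₂) (fun b hb => by
        have := step a ha b hb; linarith)
    have h3 : lamInf (K₁ ∪ K₂) - lamInf K₂ ≤ lamInf K₁ :=
      le_csInf (tset_ne K₁) (fun a ha => by have := h2 a ha; linarith)
    linarith
  have lamInf_disjoint : ∀ K₁ K₂ : Set X, IsClosed K₁ → IsClosed K₂ → Disjoint K₁ K₂ →
      lamInf K₁ + lamInf K₂ ≤ lamInf (K₁ ∪ K₂) := by
    intro K₁ K₂ hc1 hc2 hd
    obtain ⟨χ, hχ0, hχ1, hχm⟩ := exists_continuous_zero_one_of_isClosed hc2 hc1 hd.symm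
    refine le_csInf (tset_ne _) ?_
    rintro r ⟨φ, hφ0, hφ1, rfl⟩
    have e : φ * χ + φ * ((1 : C(X, ℝ)) - χ) = φ := by ring
    have h1 : lamInf K₁ ≤ Lam (φ * χ) := by
      refine lamInf_le _ _ (fun x => by
        simpa using mul_nonneg (hφ0 x) (hχm x).1) ?_
      intro x hx
      have hval : χ x = 1 := hχ1 hx
      have : (φ * χ) x = φ x := by simp [hval]
      rw [this]
      exact hφ1 x (Or.inl hx)
    have h2 : lamInf K₂ ≤ Lam (φ * ((1 : C(X, ℝ)) - χ)) := by
      refine lamInf_le _ _ (fun x => by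
        have := (hχm x).2
        simp only [ContinuousMap.mul_apply, ContinuousMap.sub_apply, ContinuousMap.one_apply]
        exact mul_nonneg (hφ0 x) (by linarith)) ?_
      intro x hx
      have hval : χ x = 0 := hχ0 hx
      have : (φ * ((1 : C(X, ℝ)) - χ)) x = φ x := by simp [hval]
      rw [this]
      exact hφ1 x (Or.inr hx)
    have hsum : Lam (φ * χ) + Lam (φ * ((1 : C(X, ℝ)) - χ)) = Lam φ := by
      rw [← lam_add, e]
    linarith
  -- assemble the content
  set κ : Content X :=
    { toFun := fun K => Real.toNNReal (lamInf (K : Set X))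
      mono' := fun K₁ K₂ h => Real.toNNReal_mono (lamInf_mono _ _ h)
      sup_disjoint' := by
        intro K₁ K₂ hd _ _
        show (lamInf ((K₁ ⊔ K₂ : TopologicalSpace.Compacts X) : Set X)).toNNReal
            = (lamInf (K₁ : Set X)).toNNReal + (lamInf (K₂ : Set X)).toNNReal
        have heq : lamInf ((K₁ : Set X) ∪ (K₂ : Set X)) = lamInf K₁ + lamInf K₂ :=
          le_antisymm (lamInf_union_le _ _)
            (lamInf_disjoint _ _ (K₁.isCompact.isClosed) (K₂.isCompact.isClosed) hd)
        have hcoe : ((K₁ ⊔ K₂ : TopologicalSpace.Compacts X) : Set X)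
            = (K₁ : Set X) ∪ (K₂ : Set X) := rfl
        rw [hcoe, heq, Real.toNNReal_add (lamInf_nonneg _) (lamInf_nonneg _)]
      sup_le' := by
        intro K₁ K₂
        show (lamInf ((K₁ ⊔ K₂ : TopologicalSpace.Compacts X) : Set X)).toNNReal
            ≤ (lamInf (K₁ : Set X)).toNNReal + (lamInf (K₂ : Set X)).toNNReal
        have hcoe : ((K₁ ⊔ K₂ : TopologicalSpace.Compacts X) : Set X)
            = (K₁ : Set X) ∪ (K₂ : Set X) := rfl
        rw [hcoe, ← Real.toNNReal_add (lamInf_nonneg _) (lamInf_nonneg _)]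
        exact Real.toNNReal_mono (lamInf_union_le _ _) } with hκ
  have hκ_apply : ∀ K : TopologicalSpace.Compacts X,
      (κ K : ℝ≥0∞) = ((Real.toNNReal (lamInf (K : Set X)) : ℝ≥0) : ℝ≥0∞) := fun K => rfl
  -- the limit measure
  have lamInf_univ : lamInf Set.univ = 1 := by
    refine le_antisymm ?_ ?_
    · have := lamInf_le Set.univ 1 (fun x => by simp) (fun x _ => by simp)
      rwa [lam_one] at this
    · refine le_csInf (tset_ne _) ?_
      rintro r ⟨φ, _, hφ1, rfl⟩
      have := lam_mono 1 φ (fun x => by simpa using hφ1 x trivial)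
      rwa [lam_one] at this
  have hprob : IsProbabilityMeasure κ.measure := by
    constructor
    rw [Content.measure_apply _ MeasurableSet.univ,
      κ.outerMeasure_of_isOpen Set.univ isOpen_univ,
      κ.innerContent_of_isCompact isCompact_univ isOpen_univ, hκ_apply]
    have : (⟨Set.univ, isCompact_univ⟩ : TopologicalSpace.Compacts X).carrier = Set.univ := rfl
    rw [show lamInf ((⟨Set.univ, isCompact_univ⟩ : TopologicalSpace.Compacts X) : Set X)
        = (1 : ℝ) from lamInf_univ]
    simp
  set νP : ProbabilityMeasure X := ⟨κ.measure, hprob⟩ with hνP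
  -- the portmanteau condition
  have h_opens : ∀ G, IsOpen G → νP G ≤ atTop.liminf (fun k => (μ (ψ k)) G) := by
    intro G hG
    set Lr : ℝ≥0 := atTop.liminf (fun k => (μ (ψ k)) G) with hLr
    have hcoeL : ((Lr : ℝ≥0) : ℝ) = atTop.liminf (fun k => (((μ (ψ k)) G : ℝ≥0) : ℝ)) := by
      refine Monotone.map_liminf_of_continuousAt (F := atTop) NNReal.coe_mono _ ?_ ?_ ?_
      · exact NNReal.continuous_coe.continuousAt
      · exact IsBoundedUnder.isCoboundedUnder_ge
          ⟨1, eventually_map.mpr (Eventually.of_forall fun k =>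
            ProbabilityMeasure.apply_le_one _ _)⟩
      · exact ⟨0, eventually_map.mpr (Eventually.of_forall fun k => zero_le)⟩
    -- real inequality for compact subsets
    have hreal : ∀ K : TopologicalSpace.Compacts X, (K : Set X) ⊆ G →
        lamInf (K : Set X) ≤ ((Lr : ℝ≥0) : ℝ) := by
      intro K hK
      have hdisj : Disjoint Gᶜ (K : Set X) := by
        rw [Set.disjoint_left]
        intro x hx hxK
        exact hx (hK hxK)
      obtain ⟨χ, hχ0, hχ1, hχm⟩ := exists_continuous_zero_one_of_isClosed
        (isClosed_compl_iff.mpr hG) K.isCompact.isClosed hdisj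
      have h1 : lamInf (K : Set X) ≤ Lam χ :=
        lamInf_le _ χ (fun x => (hχm x).1) (fun x hx => le_of_eq (hχ1 hx).symm)
      have h2 : ∀ k, ∫ x, χ x ∂(μ (ψ k) : Measure X) ≤ (((μ (ψ k)) G : ℝ≥0) : ℝ) := by
        intro k
        have hint : ∫ x, Set.indicator G (fun _ => (1 : ℝ)) x ∂(μ (ψ k) : Measure X)
            = ((μ (ψ k) : Measure X) G).toReal := by
          rw [integral_indicator_const _ hG.measurableSet]; simp; rfl
        have hmono : ∫ x, χ x ∂(μ (ψ k) : Measure X)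
            ≤ ∫ x, Set.indicator G (fun _ => (1 : ℝ)) x ∂(μ (ψ k) : Measure X) := by
          refine integral_mono (aux_int χ _) ((integrable_const (1 : ℝ)).indicator
            hG.measurableSet) ?_
          intro x
          by_cases hx : x ∈ G
          · simpa [Set.indicator_of_mem hx] using (hχm x).2
          · simp [Set.indicator_of_notMem hx, hχ0 hx]
        exact hmono.trans (le_of_eq hint)
      have h3 : Lam χ ≤ atTop.liminf (fun k => (((μ (ψ k)) G : ℝ≥0) : ℝ)) := by
        have hliml : Lam χ = atTop.liminf (fun k => ∫ x, χ x ∂(μ (ψ k) : Measure X)) :=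
          ((hLam χ).liminf_eq).symm
        rw [hliml]
        refine Filter.liminf_le_liminf (Eventually.of_forall h2) ?_ ?_
        · exact ⟨0, eventually_map.mpr (Eventually.of_forall fun k =>
            integral_nonneg (fun x => (hχm x).1))⟩
        · exact IsBoundedUnder.isCoboundedUnder_ge
            ⟨1, eventually_map.mpr (Eventually.of_forall fun k => by
              exact_mod_cast ProbabilityMeasure.apply_le_one _ _)⟩
      rw [hcoeL]
      exact h1.trans h3
    -- ℝ≥0∞ inequality
    have hmeas : κ.measure G ≤ (Lr : ℝ≥0∞) := by
      rw [Content.measure_apply _ hG.measurableSet, κ.outerMeasure_of_isOpen G hG]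
      refine iSup₂_le ?_
      intro K hK
      rw [hκ_apply]
      exact_mod_cast ENNReal.coe_le_coe.mpr
        (Real.toNNReal_le_iff_le_coe.mpr (hreal K hK))
    have := ENNReal.toNNReal_mono ENNReal.coe_ne_top hmeas
    exact this
  exact ⟨νP, ψ, hψ, MeasureTheory.tendsto_of_forall_isOpen_le_liminf h_opens⟩

/-- Weak convergence implies convergence of integrals of continuous functions. -/
lemma aux_tendsto_integral {μs : ℕ → ProbabilityMeasure X} {ν : ProbabilityMeasure X}
    (h : Tendsto μs atTop (𝓝 ν)) (f : C(X, ℝ)) :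
    Tendsto (fun k => ∫ x, f x ∂(μs k : Measure X)) atTop (𝓝 (∫ x, f x ∂(ν : Measure X))) := by
  simpa using ProbabilityMeasure.tendsto_iff_forall_integral_tendsto.mp h
    (BoundedContinuousFunction.mkOfCompact f)

/-- The set of invariant measures is closed under weak limits. -/
lemma aux_inv_closed {T : X → X} (hT : Continuous T) {μs : ℕ → ProbabilityMeasure X}
    (hμs : ∀ n, μs n ∈ invMeasures T) {ν : ProbabilityMeasure X}
    (h : Tendsto μs atTop (𝓝 ν)) : ν ∈ invMeasures T := by
  haveI : SeparableSpace X := isSeparable_univ_iff.mp (isCompact_univ.isSeparable)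
  refine ⟨hT.measurable, ?_⟩
  have hmap : Tendsto (fun k => (μs k).map hT.measurable.aemeasurable) atTop
      (𝓝 (ν.map hT.measurable.aemeasurable)) :=
    ((ProbabilityMeasure.continuous_map hT).tendsto ν).comp h
  have heq : (fun k => (μs k).map hT.measurable.aemeasurable) = μs := by
    funext k
    apply Subtype.ext
    exact (ProbabilityMeasure.toMeasure_map (μs k) hT.measurable.aemeasurable).trans
      (hμs k).map_eq
  rw [heq] at hmap
  have huniq : ν.map hT.measurable.aemeasurable = ν := tendsto_nhds_unique hmap h
  calc Measure.map T (ν : Measure X) = ((ν.map hT.measurable.aemeasurable : ProbabilityMeasure X)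
        : Measure X) := (ProbabilityMeasure.toMeasure_map ν hT.measurable.aemeasurable).symm
    _ = (ν : Measure X) := by rw [huniq]

/-- The integral of a continuous function against an invariant measure is at most `beta`. -/
lemma aux_le_beta {T : X → X} (h : C(X, ℝ)) {μ : ProbabilityMeasure X}
    (hμ : μ ∈ invMeasures T) : ∫ x, h x ∂(μ : Measure X) ≤ beta T ⇑h :=
  le_csSup ⟨‖h‖, by rintro r ⟨μ', _, rfl⟩; exact (abs_le.mp (aux_bound h _)).2⟩ ⟨μ, hμ, rfl⟩

lemma aux_beta_le {T : X → X} (hne : (invMeasures T).Nonempty) (h : C(X, ℝ)) {c : ℝ}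
    (hc : ∀ μ : ProbabilityMeasure X, μ ∈ invMeasures T → ∫ x, h x ∂(μ : Measure X) ≤ c) :
    beta T ⇑h ≤ c :=
  csSup_le (hne.image _) (by rintro r ⟨μ', hμ', rfl⟩; exact hc μ' hμ')

/-- Maximising measures exist. -/
lemma aux_exists_mmax {T : X → X} (hT : Continuous T) (hne : (invMeasures T).Nonempty)
    (h : C(X, ℝ)) : ∃ μ : ProbabilityMeasure X, μ ∈ Mmax T ⇑h := by
  have hstep : ∀ n : ℕ, ∃ μ : ProbabilityMeasure X, μ ∈ invMeasures T ∧
      beta T ⇑h - 1 / (n + 1) < ∫ x, h x ∂(μ : Measure X) := by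
    intro n
    have hlt : beta T ⇑h - 1 / ((n : ℝ) + 1) < beta T ⇑h := by
      have h0 : (0 : ℝ) < 1 / ((n : ℝ) + 1) := by positivity
      linarith
    obtain ⟨r, hr, hlt'⟩ := exists_lt_of_lt_csSup (hne.image _) hlt
    obtain ⟨μ, hμ, rfl⟩ := hr
    exact ⟨μ, hμ, hlt'⟩
  choose μ hμinv hμgt using hstep
  obtain ⟨ν, ψ, hψ, hconv⟩ := aux_cluster μ
  refine ⟨ν, aux_inv_closed hT (fun k => hμinv (ψ k)) hconv, ?_⟩
  have h1 : Tendsto (fun k => ∫ x, h x ∂(μ (ψ k) : Measure X)) atTop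
      (𝓝 (∫ x, h x ∂(ν : Measure X))) := aux_tendsto_integral hconv h
  have h2 : Tendsto (fun k => ∫ x, h x ∂(μ (ψ k) : Measure X)) atTop (𝓝 (beta T ⇑h)) := by
    refine tendsto_of_tendsto_of_tendsto_of_le_of_le
      (g := fun k => beta T ⇑h - 1 / ((ψ k : ℝ) + 1)) (h := fun _ => beta T ⇑h) ?_ ?_ ?_ ?_
    · have : Tendsto (fun k => 1 / ((ψ k : ℝ) + 1)) atTop (𝓝 0) :=
        tendsto_one_div_add_atTop_nhds_zero_nat.comp hψ.tendsto_atTop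
      simpa using tendsto_const_nhds.sub this
    · exact tendsto_const_nhds
    · exact fun k => le_of_lt (hμgt (ψ k))
    · exact fun k => aux_le_beta h (hμinv (ψ k))
  exact tendsto_nhds_unique h1 h2

/-- Expanding the integral of `f + s • g`. -/
lemma aux_expand (f g : C(X, ℝ)) (s : ℝ) (μ : Measure X) [IsFiniteMeasure μ] :
    ∫ x, (f + s • g) x ∂μ = ∫ x, f x ∂μ + s * ∫ x, g x ∂μ := by
  have : ∀ x, (f + s • g) x = f x + s * g x := by
    intro x; simp [smul_eq_mul]
  simp_rw [this]
  rw [integral_add (aux_int f μ) ((aux_int g μ).const_mul s), integral_const_mul]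

/-- `beta` is Lipschitz in the perturbation parameter. -/
lemma aux_beta_dist {T : X → X} (hne : (invMeasures T).Nonempty) (f g : C(X, ℝ)) (s : ℝ) :
    |beta T ⇑(f + s • g) - beta T ⇑f| ≤ |s| * ‖g‖ := by
  have habs : ∀ μ : ProbabilityMeasure X, |s * ∫ x, g x ∂(μ : Measure X)| ≤ |s| * ‖g‖ := by
    intro μ
    rw [abs_mul]
    exact mul_le_mul_of_nonneg_left (aux_bound g _) (abs_nonneg s)
  have h1 : beta T ⇑(f + s • g) ≤ beta T ⇑f + |s| * ‖g‖ := by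
    refine aux_beta_le hne _ (fun μ hμ => ?_)
    rw [aux_expand]
    have ha := aux_le_beta f hμ
    have hb := (abs_le.mp (habs μ)).2
    linarith
  have h2 : beta T ⇑f ≤ beta T ⇑(f + s • g) + |s| * ‖g‖ := by
    refine aux_beta_le hne _ (fun μ hμ => ?_)
    have ha := aux_le_beta (f + s • g) hμ
    rw [aux_expand] at ha
    have hb := (abs_le.mp (habs μ)).1
    linarith
  rw [abs_le]
  constructor <;> linarith

end Stmt7Aux

theorem stmt7 [Nonempty X] (T : X → X) (hT : Continuous T) (f g : C(X, ℝ)) :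
    Filter.limsup (fun τ : ℝ => sSup (maxInts T ⇑(f + τ • g) ⇑g))
        (nhdsWithin 0 (Set.Ioi 0))
      ≤ sSup (maxInts T ⇑f ⇑g) := by
  classical
  open Topology Filter in
  by_cases hne : (invMeasures T).Nonempty
  · set c := sSup (maxInts T ⇑f ⇑g) with hc
    have hmax : ∀ h : C(X, ℝ), ∃ μ, μ ∈ Mmax T ⇑h := fun h => aux_exists_mmax hT hne h
    have hmaxInts_ne : ∀ h : C(X, ℝ), (maxInts T ⇑h ⇑g).Nonempty := fun h => by
      obtain ⟨μ, hμ⟩ := hmax h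
      exact ⟨_, μ, hμ, rfl⟩
    have hbddAbove : ∀ hr : X → ℝ, BddAbove (maxInts T hr ⇑g) := fun hr =>
      ⟨‖g‖, by rintro r ⟨μ, _, rfl⟩; exact (abs_le.mp (aux_bound g _)).2⟩
    have hlower : ∀ h : C(X, ℝ), -‖g‖ ≤ sSup (maxInts T ⇑h ⇑g) := by
      intro h
      obtain ⟨μ, hμ⟩ := hmax h
      have h1 : -‖g‖ ≤ ∫ x, g x ∂(μ : Measure X) := (abs_le.mp (aux_bound g _)).1
      exact h1.trans (le_csSup (hbddAbove _) ⟨μ, hμ, rfl⟩)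
    have hev : ∀ ε : ℝ, 0 < ε → ∀ᶠ τ in nhdsWithin (0 : ℝ) (Set.Ioi 0),
        sSup (maxInts T ⇑(f + τ • g) ⇑g) ≤ c + ε := by
      intro ε hε
      by_contra hcon
      rw [Filter.not_eventually] at hcon
      have hfreq : ∃ᶠ τ in nhdsWithin (0 : ℝ) (Set.Ioi 0),
          c + ε < sSup (maxInts T ⇑(f + τ • g) ⇑g) := hcon.mono (fun τ hτ => not_le.mp hτ)
      obtain ⟨t, ht_to, ht⟩ := Filter.exists_seq_forall_of_frequently hfreq
      have ht0 : Tendsto t atTop (𝓝 (0 : ℝ)) := ht_to.mono_right nhdsWithin_le_nhds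
      have hchoice : ∀ n, ∃ μ : ProbabilityMeasure X, μ ∈ Mmax T ⇑(f + t n • g) ∧
          c + ε < ∫ x, g x ∂(μ : Measure X) := by
        intro n
        obtain ⟨r, hr, hlt⟩ := exists_lt_of_lt_csSup (hmaxInts_ne (f + t n • g)) (ht n)
        obtain ⟨μ, hμ, rfl⟩ := hr
        exact ⟨μ, hμ, hlt⟩
      choose μ hμmax hμg using hchoice
      obtain ⟨ν, ψ, hψ, hconv⟩ := aux_cluster μ
      have hinv : ν ∈ invMeasures T := aux_inv_closed hT (fun k => (hμmax (ψ k)).1) hconv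
      have hgν : c + ε ≤ ∫ x, g x ∂(ν : Measure X) :=
        ge_of_tendsto (aux_tendsto_integral hconv g)
          (Filter.Eventually.of_forall fun k => (hμg (ψ k)).le)
      have htψ : Tendsto (fun k => t (ψ k)) atTop (𝓝 (0 : ℝ)) := ht0.comp hψ.tendsto_atTop
      have hfseq : ∀ k, ∫ x, f x ∂(μ (ψ k) : Measure X)
          = beta T ⇑(f + t (ψ k) • g) - t (ψ k) * ∫ x, g x ∂(μ (ψ k) : Measure X) := by
        intro k
        have hμb := (hμmax (ψ k)).2
        rw [aux_expand] at hμb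
        linarith
      have hβ : Tendsto (fun k => beta T ⇑(f + t (ψ k) • g)) atTop (𝓝 (beta T ⇑f)) := by
        rw [tendsto_iff_dist_tendsto_zero]
        refine squeeze_zero (fun k => dist_nonneg) (fun k => ?_)
          (g := fun k => |t (ψ k)| * ‖g‖) ?_
        · rw [Real.dist_eq]
          exact aux_beta_dist hne f g (t (ψ k))
        · have habs : Tendsto (fun k => |t (ψ k)|) atTop (𝓝 (0 : ℝ)) := by
            simpa using htψ.abs
          simpa using habs.mul_const ‖g‖
      have hterm : Tendsto (fun k => t (ψ k) * ∫ x, g x ∂(μ (ψ k) : Measure X)) atTop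
          (𝓝 (0 : ℝ)) := by
        refine squeeze_zero_norm (a := fun k => |t (ψ k)| * ‖g‖) (fun k => ?_) ?_
        · rw [Real.norm_eq_abs, abs_mul]
          exact mul_le_mul_of_nonneg_left (aux_bound g _) (abs_nonneg _)
        · have habs : Tendsto (fun k => |t (ψ k)|) atTop (𝓝 (0 : ℝ)) := by
            simpa using htψ.abs
          simpa using habs.mul_const ‖g‖
      have hf1 : Tendsto (fun k => ∫ x, f x ∂(μ (ψ k) : Measure X)) atTop
          (𝓝 (beta T ⇑f)) := by
        have := hβ.sub hterm
        simp_rw [← hfseq] at this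
        simpa using this
      have hf2 := aux_tendsto_integral hconv f
      have hνmax : ν ∈ Mmax T ⇑f := ⟨hinv, tendsto_nhds_unique hf2 hf1⟩
      have hle : ∫ x, g x ∂(ν : Measure X) ≤ c := le_csSup (hbddAbove ⇑f) ⟨ν, hνmax, rfl⟩
      linarith
    refine le_of_forall_pos_le_add ?_
    intro ε hε
    refine Filter.limsup_le_of_le ?_ (hev ε hε)
    refine IsBoundedUnder.isCoboundedUnder_le ?_
    exact ⟨-‖g‖, Filter.eventually_map.mpr
      (Filter.Eventually.of_forall fun τ => hlower (f + τ • g))⟩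
  · rw [Set.not_nonempty_iff_eq_empty] at hne
    have hempty : ∀ h : X → ℝ, maxInts T h ⇑g = ∅ := by
      intro h
      have hMm : Mmax T h = ∅ := by
        rw [Set.eq_empty_iff_forall_notMem]
        intro μ hμ
        have hμ1 := hμ.1
        rw [hne] at hμ1
        exact hμ1
      unfold maxInts
      rw [hMm, Set.image_empty]
    simp only [hempty, Real.sSup_empty]
    exact le_of_eq (Filter.limsup_const 0)
end

section
/- For all continuous functions f, g : X → ℝ, the one-sided limit lim_{τ → 0⁺} (β(f + τ·g) − β(f))/τ exists and equals sup_{μ ∈ M_max(f)} ∫ g dμ. -/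
set_option linter.unusedSectionVars false
set_option maxHeartbeats 1000000

open MeasureTheory Topology Filter Set BoundedContinuousFunction NNReal TopologicalSpace
open scoped ENNReal

variable {X : Type*} [MetricSpace X] [CompactSpace X] [MeasurableSpace X] [BorelSpace X]

namespace ErgOpt

lemma integrable_cm (h : C(X, ℝ)) (ν : Measure X) [IsFiniteMeasure ν] :
    Integrable (fun x => h x) ν := by
  exact (BoundedContinuousFunction.mkOfCompact h).integrable ν

lemma abs_integral_le (h : C(X, ℝ)) (ν : Measure X) [IsProbabilityMeasure ν] :
    |∫ x, h x ∂ν| ≤ ‖h‖ := by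
  have := norm_integral_le_of_norm_le_const (μ := ν) (f := fun x => h x) (C := ‖h‖)
    (Filter.Eventually.of_forall fun x => h.norm_coe_le_norm x)
  simpa using this

section RMK

variable (Λ : C(X, ℝ) → ℝ)
variable (hadd : ∀ f g : C(X, ℝ), Λ (f + g) = Λ f + Λ g)
variable (hsmul : ∀ (c : ℝ) (f : C(X, ℝ)), Λ (c • f) = c * Λ f)
variable (hpos : ∀ f : C(X, ℝ), (∀ x, 0 ≤ f x) → 0 ≤ Λ f)

def bcnnToCM (F : X →ᵇ ℝ≥0) : C(X, ℝ) :=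
  ⟨fun x => (F x : ℝ), NNReal.continuous_coe.comp F.continuous⟩

include hadd hpos in
lemma lam_mono {f g : C(X, ℝ)} (h : ∀ x, f x ≤ g x) : Λ f ≤ Λ g := by
  have h0 : 0 ≤ Λ (g - f) := hpos _ fun x => by simp [sub_nonneg, h x]
  have : Λ g = Λ f + Λ (g - f) := by
    have := hadd f (g - f); simpa using this
  linarith

def ccToCM (F : CompactlySupportedContinuousMap X ℝ≥0) : C(X, ℝ) :=
  ⟨fun x => (F x : ℝ), NNReal.continuous_coe.comp F.continuous⟩

noncomputable def toNN : CompactlySupportedContinuousMap X ℝ≥0 →ₗ[ℝ≥0] ℝ≥0 where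
  toFun F := (Λ (ccToCM F)).toNNReal
  map_add' F G := by
    show (Λ (ccToCM (F + G))).toNNReal = _
    have hFG : ccToCM (F + G) = ccToCM F + ccToCM G := by ext x; simp [ccToCM]
    rw [hFG, hadd]
    rw [Real.toNNReal_add (hpos _ fun x => (F x).coe_nonneg) (hpos _ fun x => (G x).coe_nonneg)]
  map_smul' c F := by
    show (Λ (ccToCM (c • F))).toNNReal = _
    have hc : ccToCM (c • F) = (c : ℝ) • ccToCM F := by
      ext x; simp [ccToCM, NNReal.smul_def]
    rw [hc, hsmul, Real.toNNReal_mul c.coe_nonneg, Real.toNNReal_coe]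
    rfl

/-- The Riesz content associated to `Λ`. -/
noncomputable def rieszCont : Content X where
  toFun := rieszContentAux (toNN Λ hadd hsmul hpos)
  mono' K₁ K₂ h := rieszContentAux_mono _ h
  sup_le' K₁ K₂ := rieszContentAux_sup_le _ K₁ K₂
  sup_disjoint' K₁ K₂ hdis _ _ := rieszContentAux_union _ hdis

/-- The Riesz measure. -/
noncomputable def rieszMeas : Measure X := (rieszCont Λ hadd hsmul hpos).measure

instance : (rieszMeas Λ hadd hsmul hpos).Regular := Content.regular _

lemma rieszMeas_finite : IsFiniteMeasure (rieszMeas Λ hadd hsmul hpos) := by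
  constructor
  have := (measure_mono (subset_univ univ)).trans_lt
    (IsCompact.measure_lt_top (μ := rieszMeas Λ hadd hsmul hpos) isCompact_univ)
  simpa using this

instance : IsFiniteMeasure (rieszMeas Λ hadd hsmul hpos) := rieszMeas_finite ..

lemma rieszCont_univ :
    (rieszCont Λ hadd hsmul hpos).toFun ⟨univ, isCompact_univ⟩ = (Λ 1).toNNReal := by
  apply le_antisymm
  · refine (rieszContentAux_le _ (f := CompactlySupportedContinuousMap.continuousMapEquiv 1)
      (fun x _ => by simp [CompactlySupportedContinuousMap.continuousMapEquiv])).trans (le_of_eq ?_)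
    show (Λ (ccToCM _)).toNNReal = _
    congr 2
  · refine le_csInf (rieszContentAux_image_nonempty _ _) ?_
    rintro b ⟨F, hF, rfl⟩
    refine Real.toNNReal_mono (lam_mono Λ hadd hpos fun x => ?_)
    have : (1 : ℝ≥0) ≤ F x := hF x (mem_univ x)
    show ((1 : C(X, ℝ)) x : ℝ) ≤ (F x : ℝ)
    rw [ContinuousMap.one_apply]; exact_mod_cast this

lemma rieszMeas_univ :
    rieszMeas Λ hadd hsmul hpos univ = ((Λ 1).toNNReal : ℝ≥0∞) := by
  have h1 : rieszMeas Λ hadd hsmul hpos univ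
      = (rieszCont Λ hadd hsmul hpos).outerMeasure univ :=
    Content.measure_apply _ MeasurableSet.univ
  rw [h1, (rieszCont Λ hadd hsmul hpos).outerMeasure_of_isOpen univ isOpen_univ]
  have h2 := (rieszCont Λ hadd hsmul hpos).innerContent_of_isCompact isCompact_univ isOpen_univ
  rw [h2]
  show ((rieszCont Λ hadd hsmul hpos).toFun _ : ℝ≥0∞) = _
  rw [rieszCont_univ]

lemma lam_le_meas (ψ : C(X, ℝ)) (h0 : ∀ x, 0 ≤ ψ x) (h1 : ∀ x, ψ x ≤ 1)
    (K : Compacts X) (hK : ∀ x, x ∉ (K : Set X) → ψ x = 0) :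
    Λ ψ ≤ (rieszMeas Λ hadd hsmul hpos (K : Set X)).toReal := by
  set Λ₀ := toNN Λ hadd hsmul hpos
  have hstep1 : (Λ ψ).toNNReal ≤ rieszContentAux Λ₀ K := by
    refine le_csInf (rieszContentAux_image_nonempty _ _) ?_
    rintro b ⟨F, hF, rfl⟩
    refine Real.toNNReal_mono (lam_mono Λ hadd hpos fun x => ?_)
    show ψ x ≤ (F x : ℝ)
    by_cases hx : x ∈ (K : Set X)
    · exact (h1 x).trans (by exact_mod_cast hF x hx)
    · rw [hK x hx]; exact (F x).coe_nonneg
  have hstep2 : ((rieszContentAux Λ₀ K : ℝ≥0) : ℝ≥0∞)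
      ≤ rieszMeas Λ hadd hsmul hpos (K : Set X) := by
    have hma : rieszMeas Λ hadd hsmul hpos (K : Set X)
        = (rieszCont Λ hadd hsmul hpos).outerMeasure K :=
      Content.measure_apply _ K.isCompact.isClosed.measurableSet
    rw [hma]
    exact Content.le_outerMeasure_compacts _ K
  calc Λ ψ ≤ ((Λ ψ).toNNReal : ℝ) := Real.le_coe_toNNReal _
    _ ≤ ((rieszContentAux Λ₀ K : ℝ≥0) : ℝ) := by exact_mod_cast hstep1
    _ = (((rieszContentAux Λ₀ K : ℝ≥0) : ℝ≥0∞)).toReal := by simp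
    _ ≤ (rieszMeas Λ hadd hsmul hpos (K : Set X)).toReal :=
        ENNReal.toReal_mono (measure_ne_top _ _) hstep2

include hadd hsmul hpos in
lemma lam_zero : Λ 0 = 0 := by
  have := hsmul 0 0
  simpa using this

include hadd hsmul hpos in
lemma lam_sum (s : Finset ℕ) (F : ℕ → C(X, ℝ)) :
    Λ (∑ i ∈ s, F i) = ∑ i ∈ s, Λ (F i) := by
  classical
  induction s using Finset.induction_on with
  | empty => simpa using lam_zero Λ hadd hsmul hpos
  | insert _ _ hnot ih =>
      rw [Finset.sum_insert hnot, Finset.sum_insert hnot, hadd, ih]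

lemma lam_le_integral (f : C(X, ℝ)) (hf : ∀ x, 0 ≤ f x) :
    Λ f ≤ ∫ x, f x ∂(rieszMeas Λ hadd hsmul hpos) := by
  set μ := rieszMeas Λ hadd hsmul hpos with hμ
  have main : ∀ ε : ℝ, 0 < ε → Λ f ≤ ∫ x, f x ∂μ + ε * (μ univ).toReal := by
    intro ε hε
    obtain ⟨N, hN⟩ := exists_nat_ge (‖f‖ / ε)
    have hNf : ‖f‖ ≤ ((N : ℝ) + 1) * ε := by
      have h1 : ‖f‖ ≤ (N : ℝ) * ε := by
        rw [div_le_iff₀ hε] at hN; exact hN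
      nlinarith
    set KK : ℕ → Compacts X := fun i =>
      ⟨{x | (i : ℝ) * ε ≤ f x}, (isClosed_le continuous_const f.continuous).isCompact⟩
      with hKK
    set hfun : ℕ → C(X, ℝ) := fun i =>
      ⟨fun x => min (f x) (((i : ℝ) + 1) * ε) - min (f x) ((i : ℝ) * ε),
        (f.continuous.min continuous_const).sub (f.continuous.min continuous_const)⟩
      with hhfun
    have hnn : ∀ i x, 0 ≤ hfun i x := by
      intro i x
      simp only [hhfun, ContinuousMap.coe_mk, sub_nonneg]
      exact min_le_min le_rfl (by nlinarith)
    have hle : ∀ i x, hfun i x ≤ ε := by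
      intro i x
      simp only [hhfun, ContinuousMap.coe_mk]
      rcases le_total (f x) ((i : ℝ) * ε) with h | h
      · rw [min_eq_left h, min_eq_left (by nlinarith)]
        linarith
      · rw [min_eq_right h]
        have : min (f x) (((i : ℝ) + 1) * ε) ≤ ((i : ℝ) + 1) * ε := min_le_right _ _
        linarith
    have hzero : ∀ i x, x ∉ (KK i : Set X) → hfun i x = 0 := by
      intro i x hx
      have hlt : f x < (i : ℝ) * ε := by
        simpa [hKK] using hx
      simp only [hhfun, ContinuousMap.coe_mk]
      rw [min_eq_left hlt.le, min_eq_left (by nlinarith)]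
      ring
    have heq : ∀ i x, x ∈ (KK (i + 1) : Set X) → hfun i x = ε := by
      intro i x hx
      have hge : ((i : ℝ) + 1) * ε ≤ f x := by
        have : ((i + 1 : ℕ) : ℝ) * ε ≤ f x := hx
        push_cast at this; linarith
      simp only [hhfun, ContinuousMap.coe_mk]
      rw [min_eq_right hge, min_eq_right (by nlinarith)]
      ring
    -- (2)
    have lam_piece : ∀ i, Λ (hfun i) ≤ ε * (μ (KK i : Set X)).toReal := by
      intro i
      have hψ := lam_le_meas Λ hadd hsmul hpos (ε⁻¹ • hfun i)
        (fun x => by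
          simp only [ContinuousMap.smul_apply, smul_eq_mul]
          exact mul_nonneg (by positivity) (hnn i x))
        (fun x => by
          simp only [ContinuousMap.smul_apply, smul_eq_mul]
          rw [inv_mul_le_iff₀ hε, mul_one]
          exact hle i x)
        (KK i)
        (fun x hx => by
          simp only [ContinuousMap.smul_apply, smul_eq_mul, hzero i x hx, mul_zero])
      rw [hsmul] at hψ
      calc Λ (hfun i) = ε * (ε⁻¹ * Λ (hfun i)) := by field_simp
        _ ≤ ε * (μ (KK i : Set X)).toReal := by
            exact mul_le_mul_of_nonneg_left hψ hε.le
    -- (3)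
    have int_piece : ∀ i, ε * (μ (KK (i + 1) : Set X)).toReal ≤ ∫ x, hfun i x ∂μ := by
      intro i
      have hmeas : MeasurableSet (KK (i + 1) : Set X) :=
        (KK (i + 1)).isCompact.isClosed.measurableSet
      calc ε * (μ (KK (i + 1) : Set X)).toReal
          = ∫ _x in (KK (i + 1) : Set X), ε ∂μ := by
            rw [setIntegral_const]; rw [smul_eq_mul, measureReal_def]; ring
        _ ≤ ∫ x in (KK (i + 1) : Set X), hfun i x ∂μ := by
            refine setIntegral_mono_on (integrableOn_const (measure_ne_top _ _))
              ((integrable_cm (hfun i) μ).integrableOn) hmeas ?_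
            intro x hx
            exact (heq i x hx).ge
        _ ≤ ∫ x, hfun i x ∂μ :=
            setIntegral_le_integral (integrable_cm (hfun i) μ)
              (Filter.Eventually.of_forall (hnn i))
    -- (1) telescoping
    have hsum_pt : ∀ (m : ℕ) (x : X),
        (∑ i ∈ Finset.range m, hfun i x) = min (f x) ((m : ℝ) * ε) := by
      intro m x
      have := Finset.sum_range_sub (f := fun i => min (f x) ((i : ℝ) * ε)) m
      have hcast : ∀ i : ℕ, min (f x) (((i : ℝ) + 1) * ε) = min (f x) (((i + 1 : ℕ) : ℝ) * ε) := by
        intro i; push_cast; ring_nf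
      calc (∑ i ∈ Finset.range m, hfun i x)
          = ∑ i ∈ Finset.range m,
              (min (f x) (((i + 1 : ℕ) : ℝ) * ε) - min (f x) ((i : ℝ) * ε)) := by
            refine Finset.sum_congr rfl fun i _ => ?_
            simp only [hhfun, ContinuousMap.coe_mk]
            rw [hcast i]
        _ = min (f x) ((m : ℝ) * ε) - min (f x) ((0 : ℕ) * ε) := by
            rw [this]
        _ = min (f x) ((m : ℝ) * ε) := by
            simp [min_eq_right (hf x)]
    have hf_eq : Λ f = ∑ i ∈ Finset.range (N + 1), Λ (hfun i) := by
      rw [← lam_sum Λ hadd hsmul hpos]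
      congr 1
      ext x
      rw [ContinuousMap.sum_apply, hsum_pt (N + 1) x]
      have hb : f x ≤ ((N + 1 : ℕ) : ℝ) * ε := by
        have h1 : f x ≤ ‖f‖ :=
          (le_abs_self _).trans (by rw [← Real.norm_eq_abs]; exact f.norm_coe_le_norm x)
        push_cast
        linarith
      exact (min_eq_left hb).symm
    -- combine
    have step1 : ∑ i ∈ Finset.range (N + 1), Λ (hfun i)
        ≤ ∑ i ∈ Finset.range (N + 1), ε * (μ (KK i : Set X)).toReal :=
      Finset.sum_le_sum fun i _ => lam_piece i
    have step2 : ∑ i ∈ Finset.range (N + 1), ε * (μ (KK i : Set X)).toReal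
        = (∑ i ∈ Finset.range N, ε * (μ (KK (i + 1) : Set X)).toReal)
          + ε * (μ (KK 0 : Set X)).toReal := by
      rw [Finset.sum_range_succ']
    have step3 : ε * (μ (KK 0 : Set X)).toReal ≤ ε * (μ univ).toReal := by
      refine mul_le_mul_of_nonneg_left ?_ hε.le
      exact ENNReal.toReal_mono (measure_ne_top _ _) (measure_mono (subset_univ _))
    have step4 : (∑ i ∈ Finset.range N, ε * (μ (KK (i + 1) : Set X)).toReal)
        ≤ ∫ x, f x ∂μ := by
      calc (∑ i ∈ Finset.range N, ε * (μ (KK (i + 1) : Set X)).toReal)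
          ≤ ∑ i ∈ Finset.range N, ∫ x, hfun i x ∂μ :=
            Finset.sum_le_sum fun i _ => int_piece i
        _ = ∫ x, (∑ i ∈ Finset.range N, hfun i x) ∂μ :=
            (integral_finset_sum _ fun i _ => integrable_cm (hfun i) μ).symm
        _ ≤ ∫ x, f x ∂μ := by
            refine integral_mono (integrable_finset_sum _ fun i _ => integrable_cm (hfun i) μ)
              (integrable_cm f μ) ?_
            intro x
            show (∑ i ∈ Finset.range N, hfun i x) ≤ f x
            rw [hsum_pt N x]
            exact min_le_left _ _
    linarith [hf_eq, step1, step2, step3, step4]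
  by_contra hcon
  push_neg at hcon
  set δ := Λ f - ∫ x, f x ∂μ with hδ
  have hδpos : 0 < δ := by simp [hδ]; linarith
  have hc : (0:ℝ) ≤ (μ univ).toReal := ENNReal.toReal_nonneg
  have := main (δ / (2 * ((μ univ).toReal + 1))) (by positivity)
  have hlt : δ / (2 * ((μ univ).toReal + 1)) * (μ univ).toReal < δ := by
    rw [div_mul_eq_mul_div, div_lt_iff₀ (show (0:ℝ) < 2 * ((μ univ).toReal + 1) by positivity)]
    nlinarith
  simp only [hδ] at hlt
  linarith

include hadd hsmul in
lemma lam_const (c : ℝ) : Λ (ContinuousMap.const X c) = c * Λ 1 := by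
  have : ContinuousMap.const X c = c • (1 : C(X, ℝ)) := by
    ext x; simp
  rw [this, hsmul]

include hadd hsmul hpos in
theorem rmk_exists (hone : Λ 1 = 1) :
    ∃ ν : ProbabilityMeasure X, ∀ h : C(X, ℝ), ∫ x, h x ∂(ν : Measure X) = Λ h := by
  set μ := rieszMeas Λ hadd hsmul hpos with hμdef
  have huniv : μ univ = 1 := by
    rw [hμdef, rieszMeas_univ, hone]; simp
  have hP : IsProbabilityMeasure μ := ⟨huniv⟩
  have habs : ∀ (h : C(X, ℝ)) (x : X), |h x| ≤ ‖h‖ := fun h x => by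
    rw [← Real.norm_eq_abs]; exact h.norm_coe_le_norm x
  have hIconst : ∀ c : ℝ, ∫ _x, c ∂μ = c := fun c => by
    rw [integral_const, measureReal_def, huniv]; simp
  have key : ∀ h : C(X, ℝ), Λ h ≤ ∫ x, h x ∂μ := by
    intro h
    have h0 : ∀ x, 0 ≤ (h + ContinuousMap.const X ‖h‖) x := by
      intro x
      have := (abs_le.mp (habs h x)).1
      simp only [ContinuousMap.add_apply, ContinuousMap.const_apply]
      linarith
    have hL := lam_le_integral Λ hadd hsmul hpos _ h0
    rw [hadd, lam_const Λ hadd hsmul, hone, mul_one] at hL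
    have hint : ∫ x, (h + ContinuousMap.const X ‖h‖) x ∂μ = (∫ x, h x ∂μ) + ‖h‖ := by
      simp only [ContinuousMap.add_apply, ContinuousMap.const_apply]
      rw [integral_add (integrable_cm h μ) (integrable_const _), hIconst]
    rw [hint] at hL
    linarith
  have key2 : ∀ h : C(X, ℝ), ∫ x, h x ∂μ ≤ Λ h := by
    intro h
    have h0 : ∀ x, 0 ≤ (ContinuousMap.const X ‖h‖ - h) x := by
      intro x
      have := (abs_le.mp (habs h x)).2
      simp only [ContinuousMap.sub_apply, ContinuousMap.const_apply]
      linarith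
    have hL := lam_le_integral Λ hadd hsmul hpos _ h0
    have hsub : Λ (ContinuousMap.const X ‖h‖ - h) = ‖h‖ - Λ h := by
      have hsplit := hadd (ContinuousMap.const X ‖h‖ - h) h
      rw [sub_add_cancel, lam_const Λ hadd hsmul, hone, mul_one] at hsplit
      linarith
    have hint : ∫ x, (ContinuousMap.const X ‖h‖ - h) x ∂μ = ‖h‖ - ∫ x, h x ∂μ := by
      simp only [ContinuousMap.sub_apply, ContinuousMap.const_apply]
      rw [integral_sub (integrable_const _) (integrable_cm h μ), hIconst]
    rw [hsub, hint] at hL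
    linarith
  exact ⟨⟨μ, hP⟩, fun h => le_antisymm (key2 h) (key h)⟩

end RMK

/-- Ultrafilter limits of probability measures exist (weak compactness). -/
theorem exists_lim_measure {ι : Type*} (U : Ultrafilter ι) (μs : ι → ProbabilityMeasure X) :
    ∃ ν : ProbabilityMeasure X, ∀ h : C(X, ℝ),
      Filter.Tendsto (fun i => ∫ x, h x ∂(μs i : Measure X)) (U : Filter ι)
        (𝓝 (∫ x, h x ∂(ν : Measure X))) := by
  have hbound : ∀ (h : C(X, ℝ)) (i : ι),
      (∫ x, h x ∂(μs i : Measure X)) ∈ Icc (-‖h‖) ‖h‖ := fun h i =>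
    abs_le.mp (abs_integral_le h _)
  have hex : ∀ h : C(X, ℝ), ∃ L,
      Filter.Tendsto (fun i => ∫ x, h x ∂(μs i : Measure X)) (U : Filter ι) (𝓝 L) := by
    intro h
    obtain ⟨L, _, hL⟩ := (isCompact_Icc (a := -‖h‖) (b := ‖h‖)).ultrafilter_le_nhds
      (U.map fun i => ∫ x, h x ∂(μs i : Measure X))
      (Filter.le_principal_iff.mpr (Filter.mem_map.mpr (Filter.univ_mem' fun i => hbound h i)))
    exact ⟨L, by rwa [Ultrafilter.coe_map] at hL⟩
  choose Lam hLam using hex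
  have hne : (U : Filter ι).NeBot := U.neBot
  have hadd : ∀ h g : C(X, ℝ), Lam (h + g) = Lam h + Lam g := by
    intro h g
    refine tendsto_nhds_unique (hLam (h + g)) ?_
    refine Filter.Tendsto.congr (fun i => ?_) ((hLam h).add (hLam g))
    simp only [ContinuousMap.add_apply]
    rw [integral_add (integrable_cm h _) (integrable_cm g _)]
  have hsmul : ∀ (c : ℝ) (h : C(X, ℝ)), Lam (c • h) = c * Lam h := by
    intro c h
    refine tendsto_nhds_unique (hLam (c • h)) ?_
    refine Filter.Tendsto.congr (fun i => ?_) ((hLam h).const_mul c)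
    simp only [ContinuousMap.smul_apply, smul_eq_mul]
    rw [integral_const_mul]
  have hpos : ∀ h : C(X, ℝ), (∀ x, 0 ≤ h x) → 0 ≤ Lam h := by
    intro h hh
    exact ge_of_tendsto' (hLam h) fun i => integral_nonneg fun x => hh x
  have hone : Lam 1 = 1 := by
    refine tendsto_nhds_unique (hLam 1) ?_
    have : ∀ i, ∫ x, (1 : C(X, ℝ)) x ∂(μs i : Measure X) = 1 := by
      intro i
      simp
    simpa [this] using (tendsto_const_nhds (α := ℝ))
  obtain ⟨ν, hν⟩ := rmk_exists Lam hadd hsmul hpos hone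
  exact ⟨ν, fun h => by rw [hν h]; exact hLam h⟩

section Invariance

variable {T : X → X}

lemma integral_comp_of_mem (hT : Continuous T) {ν : ProbabilityMeasure X}
    (hν : ν ∈ invMeasures T) (h : C(X, ℝ)) :
    ∫ x, h (T x) ∂(ν : Measure X) = ∫ x, h x ∂(ν : Measure X) := by
  calc ∫ x, h (T x) ∂(ν : Measure X)
      = ∫ y, h y ∂(Measure.map T (ν : Measure X)) :=
        (integral_map hT.measurable.aemeasurable h.continuous.aestronglyMeasurable).symm
    _ = ∫ x, h x ∂(ν : Measure X) := by rw [hν.map_eq]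

lemma mem_invMeasures_of_integrals (hT : Continuous T) (ν : ProbabilityMeasure X)
    (h : ∀ h : C(X, ℝ), ∫ x, h (T x) ∂(ν : Measure X) = ∫ x, h x ∂(ν : Measure X)) :
    ν ∈ invMeasures T := by
  have hTm : Measurable T := hT.measurable
  refine ⟨hTm, ?_⟩
  have hfin : IsProbabilityMeasure (Measure.map T (ν : Measure X)) :=
    Measure.isProbabilityMeasure_map hTm.aemeasurable
  apply ext_of_forall_lintegral_eq_of_IsFiniteMeasure
  intro F
  rw [lintegral_map (F.measurable_coe_ennreal_comp) hTm]
  have hiT : Integrable (fun x => ((F (T x) : ℝ))) (ν : Measure X) :=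
    integrable_cm ((bcnnToCM F).comp ⟨T, hT⟩) (ν : Measure X)
  have hi : Integrable (fun x => ((F x : ℝ))) (ν : Measure X) :=
    integrable_cm (bcnnToCM F) (ν : Measure X)
  rw [lintegral_coe_eq_integral (fun x => F (T x)) hiT,
    lintegral_coe_eq_integral (fun x => F x) hi]
  congr 1
  exact h (bcnnToCM F)

end Invariance

section Beta

variable [Nonempty X] {T : X → X}

lemma bddAbove_ints (T : X → X) (h : C(X, ℝ)) :
    ∀ y ∈ (fun μ : ProbabilityMeasure X => ∫ x, h x ∂(μ : Measure X)) '' invMeasures T,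
      y ≤ ‖h‖ := by
  rintro y ⟨ν, _, rfl⟩
  exact (abs_le.mp (abs_integral_le h (ν : Measure X))).2

lemma int_le_beta {ν : ProbabilityMeasure X} (hν : ν ∈ invMeasures T) (h : C(X, ℝ)) :
    ∫ x, h x ∂(ν : Measure X) ≤ beta T ⇑h :=
  le_csSup ⟨‖h‖, bddAbove_ints T h⟩ (Set.mem_image_of_mem _ hν)

lemma exists_max (hT : Continuous T) (hne : (invMeasures T).Nonempty) (h : C(X, ℝ)) :
    ∃ ν ∈ invMeasures T, ∫ x, h x ∂(ν : Measure X) = beta T ⇑h := by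
  have hsne : ((fun μ : ProbabilityMeasure X => ∫ x, h x ∂(μ : Measure X))
      '' invMeasures T).Nonempty := hne.image _
  have hmem : ∀ n : ℕ, ∃ ν, ν ∈ invMeasures T ∧
      beta T ⇑h - 1 / ((n : ℝ) + 1) < ∫ x, h x ∂(ν : Measure X) := by
    intro n
    obtain ⟨y, hy, hlt⟩ := exists_lt_of_lt_csSup hsne
      (show beta T ⇑h - 1 / ((n : ℝ) + 1) < beta T ⇑h by
        have : (0 : ℝ) < 1 / ((n : ℝ) + 1) := by positivity
        linarith)
    obtain ⟨ν, hν, rfl⟩ := hy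
    exact ⟨ν, hν, hlt⟩
  choose μs hμs hlt using hmem
  set U : Ultrafilter ℕ := Ultrafilter.of Filter.atTop with hU
  obtain ⟨ν, hν⟩ := exists_lim_measure U μs
  have hUle : (U : Filter ℕ) ≤ Filter.atTop := Ultrafilter.of_le _
  have hinv : ν ∈ invMeasures T := by
    refine mem_invMeasures_of_integrals hT ν fun hh => ?_
    refine tendsto_nhds_unique ?_ (hν hh)
    have := hν (hh.comp ⟨T, hT⟩)
    exact this.congr fun n => integral_comp_of_mem hT (hμs n) hh
  have hsq : Filter.Tendsto (fun n : ℕ => ∫ x, h x ∂(μs n : Measure X)) Filter.atTop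
      (𝓝 (beta T ⇑h)) := by
    have h10 : Filter.Tendsto (fun n : ℕ => 1 / ((n : ℝ) + 1)) Filter.atTop (𝓝 0) :=
      tendsto_one_div_add_atTop_nhds_zero_nat
    refine tendsto_of_tendsto_of_tendsto_of_le_of_le
      (g := fun n : ℕ => beta T ⇑h - 1 / ((n : ℝ) + 1)) (h := fun _ : ℕ => beta T ⇑h)
      ?_ tendsto_const_nhds (fun n => (hlt n).le) (fun n => int_le_beta (hμs n) h)
    simpa using tendsto_const_nhds.sub h10
  exact ⟨ν, hinv, tendsto_nhds_unique (hν h) (hsq.mono_left hUle)⟩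

end Beta

end ErgOpt

open ErgOpt

theorem stmt8 [Nonempty X] (T : X → X) (hT : Continuous T) (f g : C(X, ℝ)) :
    Filter.Tendsto (fun τ : ℝ => (beta T ⇑(f + τ • g) - beta T ⇑f) / τ)
      (nhdsWithin 0 (Set.Ioi 0)) (nhds (sSup (maxInts T ⇑f ⇑g))) := by
  classical
  by_cases hne : (invMeasures T).Nonempty
  swap
  · -- no invariant measures: everything is zero
    have hempty : invMeasures T = ∅ := Set.not_nonempty_iff_eq_empty.mp hne
    have hbeta : ∀ h : X → ℝ, beta T h = 0 := fun h => by
      rw [beta, hempty, Set.image_empty, Real.sSup_empty]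
    have hMmax : Mmax T ⇑f = ∅ := by
      ext ν; simp [Mmax, hempty]
    have hmax : maxInts T ⇑f ⇑g = ∅ := by
      rw [maxInts, hMmax, Set.image_empty]
    have hfun : (fun τ : ℝ => (beta T ⇑(f + τ • g) - beta T ⇑f) / τ) = fun _ => (0 : ℝ) := by
      funext τ; rw [hbeta, hbeta]; simp
    rw [hfun, hmax, Real.sSup_empty]
    exact tendsto_const_nhds
  -- main case
  have int_affine : ∀ (τ : ℝ) (ν : ProbabilityMeasure X),
      ∫ x, (f + τ • g) x ∂(ν : Measure X)
        = (∫ x, f x ∂(ν : Measure X)) + τ * ∫ x, g x ∂(ν : Measure X) := by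
    intro τ ν
    simp only [ContinuousMap.add_apply, ContinuousMap.smul_apply, smul_eq_mul]
    rw [integral_add (integrable_cm f _) ((integrable_cm g _).const_mul τ), integral_const_mul]
  set S := sSup (maxInts T ⇑f ⇑g) with hS
  obtain ⟨ν₀, hν₀inv, hν₀max⟩ := exists_max hT hne f
  have hMne : (maxInts T ⇑f ⇑g).Nonempty := ⟨_, Set.mem_image_of_mem _ ⟨hν₀inv, hν₀max⟩⟩
  have hMbdd : BddAbove (maxInts T ⇑f ⇑g) := by
    refine ⟨‖g‖, ?_⟩
    rintro y ⟨ν, _, rfl⟩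
    exact (abs_le.mp (abs_integral_le g (ν : Measure X))).2
  have hlower : ∀ τ : ℝ, 0 < τ → S ≤ (beta T ⇑(f + τ • g) - beta T ⇑f) / τ := by
    intro τ hτ
    refine csSup_le hMne ?_
    rintro y ⟨ν, ⟨hνinv, hνmax⟩, rfl⟩
    rw [le_div_iff₀ hτ]
    have h1 : ∫ x, (f + τ • g) x ∂(ν : Measure X) ≤ beta T ⇑(f + τ • g) :=
      int_le_beta hνinv (f + τ • g)
    rw [int_affine, hνmax] at h1
    nlinarith [h1]
  have hupper : ∀ ε : ℝ, 0 < ε →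
      ∀ᶠ τ in nhdsWithin (0:ℝ) (Set.Ioi 0),
        (beta T ⇑(f + τ • g) - beta T ⇑f) / τ < S + ε := by
    intro ε hε
    by_contra hcon
    rw [Filter.not_eventually] at hcon
    have hfreq : ∃ᶠ τ in nhdsWithin (0:ℝ) (Set.Ioi 0),
        S + ε ≤ (beta T ⇑(f + τ • g) - beta T ⇑f) / τ :=
      hcon.mono fun τ hτ => not_lt.mp hτ
    have hNB : (nhdsWithin (0:ℝ) (Set.Ioi 0) ⊓
        Filter.principal {τ : ℝ | S + ε ≤ (beta T ⇑(f + τ • g) - beta T ⇑f) / τ}).NeBot :=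
      Filter.frequently_iff_neBot.mp hfreq
    set U : Ultrafilter ℝ := @Ultrafilter.of _ _ hNB with hUdef
    have hUle : (U : Filter ℝ) ≤ _ := Ultrafilter.of_le _
    have hUle1 : (U : Filter ℝ) ≤ nhdsWithin (0:ℝ) (Set.Ioi 0) := hUle.trans inf_le_left
    have hUle2 : (U : Filter ℝ) ≤
        Filter.principal {τ : ℝ | S + ε ≤ (beta T ⇑(f + τ • g) - beta T ⇑f) / τ} :=
      hUle.trans inf_le_right
    have hM : ∀ τ : ℝ, ∃ ν, ν ∈ invMeasures T ∧
        ∫ x, (f + τ • g) x ∂(ν : Measure X) = beta T ⇑(f + τ • g) := by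
      intro τ
      obtain ⟨ν, hν1, hν2⟩ := exists_max hT hne (f + τ • g)
      exact ⟨ν, hν1, hν2⟩
    choose μτ hμτinv hμτmax using hM
    obtain ⟨ν, hν⟩ := exists_lim_measure U μτ
    have hτ0 : Filter.Tendsto (fun τ : ℝ => τ) (U : Filter ℝ) (𝓝 0) :=
      Filter.tendsto_id.mono_left (hUle1.trans nhdsWithin_le_nhds)
    have hIoi : ∀ᶠ τ in (U : Filter ℝ), (0:ℝ) < τ := hUle1 self_mem_nhdsWithin
    have hbad : ∀ᶠ τ in (U : Filter ℝ),
        S + ε ≤ (beta T ⇑(f + τ • g) - beta T ⇑f) / τ :=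
      hUle2 (Filter.mem_principal_self _)
    have hinv : ν ∈ invMeasures T := by
      refine mem_invMeasures_of_integrals hT ν fun hh => ?_
      refine tendsto_nhds_unique ?_ (hν hh)
      exact (hν (hh.comp ⟨T, hT⟩)).congr fun τ => integral_comp_of_mem hT (hμτinv τ) hh
    have hup : ∀ τ : ℝ, ∫ x, f x ∂(μτ τ : Measure X) ≤ beta T ⇑f :=
      fun τ => int_le_beta (hμτinv τ) f
    have hid : ∀ τ : ℝ, ∫ x, f x ∂(μτ τ : Measure X)
        = beta T ⇑(f + τ • g) - τ * ∫ x, g x ∂(μτ τ : Measure X) := by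
      intro τ
      have := hμτmax τ
      rw [int_affine] at this
      linarith
    have hlow : ∀ᶠ τ in (U : Filter ℝ),
        beta T ⇑f - τ * (2 * ‖g‖) ≤ ∫ x, f x ∂(μτ τ : Measure X) := by
      filter_upwards [hIoi] with τ hτ
      have h1 : beta T ⇑f + τ * ∫ x, g x ∂(ν₀ : Measure X) ≤ beta T ⇑(f + τ • g) := by
        have h2 := int_le_beta hν₀inv (f + τ • g)
        rw [int_affine, hν₀max] at h2
        exact h2
      have h2 := abs_le.mp (abs_integral_le g (ν₀ : Measure X))
      have h3 := abs_le.mp (abs_integral_le g (μτ τ : Measure X))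
      rw [hid τ]
      nlinarith [mul_le_mul_of_nonneg_left h3.2 hτ.le, mul_le_mul_of_nonneg_left h2.1 hτ.le]
    have hAβ : Filter.Tendsto (fun τ : ℝ => ∫ x, f x ∂(μτ τ : Measure X)) (U : Filter ℝ)
        (𝓝 (beta T ⇑f)) := by
      refine tendsto_of_tendsto_of_tendsto_of_le_of_le' ?_ tendsto_const_nhds hlow
        (Filter.Eventually.of_forall hup)
      have : Filter.Tendsto (fun τ : ℝ => beta T ⇑f - τ * (2 * ‖g‖)) (U : Filter ℝ)
          (𝓝 (beta T ⇑f - 0 * (2 * ‖g‖))) :=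
        tendsto_const_nhds.sub (hτ0.mul_const _)
      simpa using this
    have hνmax : ∫ x, f x ∂(ν : Measure X) = beta T ⇑f :=
      tendsto_nhds_unique (hν f) hAβ
    have hνS : ∫ x, g x ∂(ν : Measure X) ≤ S :=
      le_csSup hMbdd ⟨ν, ⟨hinv, hνmax⟩, rfl⟩
    have hBge : ∀ᶠ τ in (U : Filter ℝ), S + ε ≤ ∫ x, g x ∂(μτ τ : Measure X) := by
      filter_upwards [hIoi, hbad] with τ hτ hb
      have h1 : beta T ⇑(f + τ • g) ≤ beta T ⇑f + τ * ∫ x, g x ∂(μτ τ : Measure X) := by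
        rw [← hμτmax τ, int_affine]
        have := hup τ
        linarith
      have h4 : (beta T ⇑(f + τ • g) - beta T ⇑f) / τ ≤ ∫ x, g x ∂(μτ τ : Measure X) := by
        rw [div_le_iff₀ hτ]
        nlinarith [h1]
      linarith
    have hfin : S + ε ≤ ∫ x, g x ∂(ν : Measure X) := ge_of_tendsto (hν g) hBge
    linarith
  refine tendsto_order.mpr ⟨?_, ?_⟩
  · intro a ha
    filter_upwards [self_mem_nhdsWithin] with τ hτ
    exact lt_of_lt_of_le ha (hlower τ hτ)
  · intro a ha
    filter_upwards [hupper (a - S) (by linarith)] with τ h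
    linarith
end

section
/- For all continuous functions f, g : X → ℝ, the one-sided limit lim_{τ → 0⁻} (β(f + τ·g) − β(f))/τ exists and equals inf_{μ ∈ M_max(f)} ∫ g dμ. -/
open MeasureTheory

variable {X : Type*} [MetricSpace X] [CompactSpace X] [MeasurableSpace X] [BorelSpace X]

open Topology NNReal ENNReal

section Stair

lemma stair_sum (ε : ℝ) (hε : 0 ≤ ε) (t : ℝ) (ht : 0 ≤ t) :
    ∀ N : ℕ, ∑ i ∈ Finset.range N, min (max (t - i*ε) 0) ε = min t (N*ε) := by
  intro N
  induction N with
  | zero => simp [min_eq_right ht]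
  | succ N ih =>
    have hcast : ((N+1 : ℕ) : ℝ) = (N : ℝ) + 1 := by push_cast; ring
    have hNe : ((N:ℝ)+1)*ε = (N:ℝ)*ε + ε := by ring
    rw [Finset.sum_range_succ, ih, hcast]
    rcases le_total t ((N : ℝ)*ε) with h | h
    · rw [min_eq_left h, max_eq_right (by linarith), min_eq_left hε, add_zero,
        min_eq_left (by nlinarith)]
    · rw [min_eq_right h, max_eq_left (by linarith)]
      rcases le_total t (((N:ℝ)+1)*ε) with h2 | h2
      · rw [min_eq_left (by linarith [hNe]), min_eq_left h2]; ring
      · rw [min_eq_right (by linarith [hNe]), min_eq_right h2]; ring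

end Stair

section RMK

/-- test functions for the Riesz content of `K`. -/
def testSet (K : Set X) : Set C(X,ℝ) := {f | (∀ x, 0 ≤ f x) ∧ ∀ x ∈ K, 1 ≤ f x}

lemma one_mem_testSet (K : Set X) : (1 : C(X,ℝ)) ∈ testSet K :=
  ⟨fun _ => zero_le_one, fun _ _ => le_refl 1⟩

variable (Λ : WeakDual ℝ C(X,ℝ))

/-- the (real-valued) Riesz content. -/
noncomputable def lamR (K : Set X) : ℝ := sInf (⇑Λ '' testSet K)

variable {Λ}
variable (hpos : ∀ h : C(X,ℝ), (∀ x, 0 ≤ h x) → 0 ≤ Λ h) (hone : Λ 1 = 1)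
set_option linter.unusedSectionVars false

include hpos in
lemma lam_mono {f g : C(X,ℝ)} (h : ∀ x, f x ≤ g x) : Λ f ≤ Λ g := by
  have h0 : 0 ≤ Λ (g - f) := hpos _ (fun x => by simp [sub_nonneg, h x])
  have : Λ (g - f) = Λ g - Λ f := map_sub Λ g f
  linarith

lemma testVals_nonempty (K : Set X) : (⇑Λ '' testSet K).Nonempty :=
  ⟨Λ 1, 1, one_mem_testSet K, rfl⟩

include hpos in
lemma testVals_bddBelow (K : Set X) : BddBelow (⇑Λ '' testSet K) :=
  ⟨0, by rintro b ⟨f, hf, rfl⟩; exact hpos f hf.1⟩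

include hpos in
lemma lamR_nonneg (K : Set X) : 0 ≤ lamR Λ K :=
  le_csInf (testVals_nonempty K) (by rintro b ⟨f, hf, rfl⟩; exact hpos f hf.1)

include hpos in
lemma lamR_le {K : Set X} {f : C(X,ℝ)} (hf : f ∈ testSet K) : lamR Λ K ≤ Λ f :=
  csInf_le (testVals_bddBelow hpos K) ⟨f, hf, rfl⟩

include hpos hone in
lemma lamR_le_one (K : Set X) : lamR Λ K ≤ 1 := by
  have := lamR_le hpos (one_mem_testSet K)
  rwa [hone] at this

include hpos in
lemma lamR_mono {K₁ K₂ : Set X} (h : K₁ ⊆ K₂) : lamR Λ K₁ ≤ lamR Λ K₂ :=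
  csInf_le_csInf (testVals_bddBelow hpos K₁) (testVals_nonempty K₂)
    (Set.image_mono (fun f hf => ⟨hf.1, fun x hx => hf.2 x (h hx)⟩))

lemma exists_test_lt {K : Set X} {ε : ℝ} (hε : 0 < ε) :
    ∃ f ∈ testSet K, Λ f < lamR Λ K + ε := by
  obtain ⟨b, ⟨f, hf, rfl⟩, hb⟩ :=
    exists_lt_of_csInf_lt (testVals_nonempty (Λ := Λ) K) (lt_add_of_pos_right (lamR Λ K) hε)
  exact ⟨f, hf, hb⟩

include hpos hone in
lemma lamR_univ : lamR Λ (Set.univ : Set X) = 1 := by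
  refine le_antisymm (lamR_le_one hpos hone _) (le_csInf (testVals_nonempty _) ?_)
  rintro b ⟨f, hf, rfl⟩
  have := lam_mono (f := 1) (g := f) hpos (fun x => hf.2 x (Set.mem_univ x))
  rwa [hone] at this

include hpos in
lemma lamR_union_le (K₁ K₂ : Set X) :
    lamR Λ (K₁ ∪ K₂) ≤ lamR Λ K₁ + lamR Λ K₂ := by
  refine le_of_forall_pos_le_add (fun ε hε => ?_)
  obtain ⟨f₁, hf₁, hΛ₁⟩ := exists_test_lt (K := K₁) (Λ := Λ) (half_pos hε)
  obtain ⟨f₂, hf₂, hΛ₂⟩ := exists_test_lt (K := K₂) (Λ := Λ) (half_pos hε)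
  have hmem : f₁ + f₂ ∈ testSet (K₁ ∪ K₂) := by
    constructor
    · intro x; simpa using add_nonneg (hf₁.1 x) (hf₂.1 x)
    · rintro x (hx | hx)
      · have := hf₁.2 x hx; have := hf₂.1 x; simp only [ContinuousMap.add_apply]; linarith
      · have := hf₂.2 x hx; have := hf₁.1 x; simp only [ContinuousMap.add_apply]; linarith
  have := lamR_le hpos hmem
  rw [map_add] at this
  linarith

include hpos in
lemma lamR_union_disjoint {K₁ K₂ : Set X} (hK₁ : IsClosed K₁) (hK₂ : IsClosed K₂)
    (hd : Disjoint K₁ K₂) :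
    lamR Λ (K₁ ∪ K₂) = lamR Λ K₁ + lamR Λ K₂ := by
  refine le_antisymm (lamR_union_le hpos K₁ K₂) ?_
  obtain ⟨u, hu0, hu1, hu01⟩ := exists_continuous_zero_one_of_isClosed hK₁ hK₂ hd
  refine le_csInf (testVals_nonempty _) ?_
  rintro b ⟨f, hf, rfl⟩
  have h₁ : f * (1 - u) ∈ testSet K₁ := by
    constructor
    · intro x
      have := (hu01 x).2
      exact mul_nonneg (hf.1 x) (by simp only [ContinuousMap.sub_apply, ContinuousMap.one_apply]; linarith)
    · intro x hx
      have hux : u x = 0 := hu0 hx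
      have := hf.2 x (Or.inl hx)
      simp only [ContinuousMap.mul_apply, ContinuousMap.sub_apply, ContinuousMap.one_apply, hux]
      linarith
  have h₂ : f * u ∈ testSet K₂ := by
    constructor
    · intro x; exact mul_nonneg (hf.1 x) (hu01 x).1
    · intro x hx
      have hux : u x = 1 := hu1 hx
      have := hf.2 x (Or.inr hx)
      simp only [ContinuousMap.mul_apply, hux, mul_one]
      linarith
  have hsum : f * (1 - u) + f * u = f := by ring
  have := add_le_add (lamR_le hpos h₁) (lamR_le hpos h₂)
  rw [← map_add, hsum] at this
  exact this

include hpos hone in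
lemma exists_compact_nbhd (K : Set X) {ε : ℝ} (hε : 0 < ε) :
    ∃ K' : Set X, IsCompact K' ∧ K ⊆ interior K' ∧ lamR Λ K' ≤ lamR Λ K + ε := by
  set ε₀ := min ε 1 with hε₀def
  have hε₀ : 0 < ε₀ := lt_min hε one_pos
  have hε₀ε : ε₀ ≤ ε := min_le_left _ _
  have hε₀1 : ε₀ ≤ 1 := min_le_right _ _
  set δ := ε₀ / 4 with hδdef
  have hδ : 0 < δ := by positivity
  have hδ4 : δ ≤ 1/4 := by rw [hδdef]; linarith
  have hc : (0:ℝ) < 1 - δ := by linarith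
  obtain ⟨f, hf, hΛf⟩ := exists_test_lt (K := K) (Λ := Λ) hδ
  refine ⟨{x | 1 - δ ≤ f x}, (isClosed_le continuous_const f.continuous).isCompact, ?_, ?_⟩
  · have hopen : IsOpen {x : X | 1 - δ < f x} := isOpen_lt continuous_const f.continuous
    have hsub : {x : X | 1 - δ < f x} ⊆ {x : X | 1 - δ ≤ f x} := fun x hx => by
      simp only [Set.mem_setOf_eq] at hx ⊢; linarith
    have hKsub : K ⊆ {x : X | 1 - δ < f x} := fun x hx => by
      have := hf.2 x hx
      simp only [Set.mem_setOf_eq]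
      linarith
    exact hKsub.trans (interior_maximal hsub hopen)
  · have hmem : ((1 - δ)⁻¹ • f) ∈ testSet {x | 1 - δ ≤ f x} := by
      constructor
      · intro x
        simp only [ContinuousMap.smul_apply, smul_eq_mul]
        exact mul_nonneg (inv_nonneg.2 hc.le) (hf.1 x)
      · intro x hx
        simp only [Set.mem_setOf_eq] at hx
        simp only [ContinuousMap.smul_apply, smul_eq_mul]
        have h' : (1 - δ)⁻¹ * (1 - δ) ≤ (1 - δ)⁻¹ * f x :=
          mul_le_mul_of_nonneg_left hx (inv_nonneg.2 hc.le)
        rwa [inv_mul_cancel₀ (ne_of_gt hc)] at h' 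
    have h1 := lamR_le hpos hmem
    rw [_root_.map_smul, smul_eq_mul] at h1
    have h2 : (1 - δ)⁻¹ * Λ f ≤ (1 - δ)⁻¹ * (lamR Λ K + δ) :=
      mul_le_mul_of_nonneg_left hΛf.le (inv_nonneg.2 hc.le)
    have h3 : (1 - δ)⁻¹ * (lamR Λ K + δ) ≤ lamR Λ K + ε := by
      rw [inv_mul_le_iff₀ hc]
      have hl1 : lamR Λ K ≤ 1 := lamR_le_one hpos hone K
      have hl0 : 0 ≤ lamR Λ K := lamR_nonneg hpos K
      have hδε : δ * ε ≤ ε / 4 := by nlinarith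
      have hδl : δ * lamR Λ K ≤ δ := by nlinarith
      nlinarith
    linarith

include hpos in
/-- The Riesz content associated to `Λ`. -/
noncomputable def rieszCont : Content X where
  toFun K := Real.toNNReal (lamR Λ K)
  mono' K₁ K₂ h := Real.toNNReal_mono (lamR_mono hpos h)
  sup_disjoint' K₁ K₂ hd h₁ h₂ := by
    simp only [TopologicalSpace.Compacts.coe_sup]
    rw [lamR_union_disjoint hpos h₁ h₂ hd,
      Real.toNNReal_add (lamR_nonneg hpos _) (lamR_nonneg hpos _)]
  sup_le' K₁ K₂ := by
    simp only [TopologicalSpace.Compacts.coe_sup]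
    rw [← Real.toNNReal_add (lamR_nonneg hpos _) (lamR_nonneg hpos _)]
    exact Real.toNNReal_mono (lamR_union_le hpos _ _)

include hpos hone in
lemma rieszCont_regular : MeasureTheory.Content.ContentRegular (rieszCont hpos) := by
  intro K
  refine le_antisymm (le_iInf₂ fun K' hK' => ?_) ?_
  · exact ENNReal.coe_le_coe.2 (Real.toNNReal_mono
      (lamR_mono hpos (hK'.trans interior_subset)))
  · refine ENNReal.le_of_forall_pos_le_add fun ε hε _ => ?_
    obtain ⟨K', hK'c, hK'i, hK'l⟩ := exists_compact_nbhd hpos hone (K : Set X)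
      (show (0:ℝ) < ε by exact_mod_cast hε)
    refine le_trans (iInf₂_le (⟨K', hK'c⟩ : TopologicalSpace.Compacts X) hK'i) ?_
    show ((Real.toNNReal (lamR Λ K') : ℝ≥0) : ℝ≥0∞) ≤ ((Real.toNNReal (lamR Λ (K : Set X)) : ℝ≥0) : ℝ≥0∞) + (ε : ℝ≥0∞)
    rw [← ENNReal.coe_add, ENNReal.coe_le_coe]
    have : lamR Λ K' ≤ lamR Λ (K : Set X) + (ε : ℝ) := hK'l
    calc Real.toNNReal (lamR Λ K') ≤ Real.toNNReal (lamR Λ (K : Set X) + (ε:ℝ)) :=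
          Real.toNNReal_mono this
      _ = Real.toNNReal (lamR Λ (K : Set X)) + ε := by
          rw [Real.toNNReal_add (lamR_nonneg hpos ((K : Set X))) ε.coe_nonneg, Real.toNNReal_coe]

include hpos hone in
lemma rieszMeasure_closed (K : Set X) (hK : IsClosed K) :
    (rieszCont hpos).measure K = ENNReal.ofReal (lamR Λ K) := by
  have := MeasureTheory.Content.measure_eq_content_of_regular (rieszCont hpos)
    (rieszCont_regular hpos hone) ⟨K, hK.isCompact⟩
  exact this

include hpos hone in
lemma rieszMeasure_prob : IsProbabilityMeasure ((rieszCont hpos).measure) := by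
  constructor
  have := rieszMeasure_closed hpos hone (Set.univ : Set X) isClosed_univ
  rw [this, lamR_univ hpos hone, ENNReal.ofReal_one]

include hpos hone in
theorem integral_eq_lam (μ : Measure X) [IsProbabilityMeasure μ]
    (hK : ∀ K : Set X, IsClosed K → μ K = ENNReal.ofReal (lamR Λ K)) (f : C(X,ℝ)) :
    ∫ x, f x ∂μ = Λ f := by
  have hint : ∀ h : C(X,ℝ), Integrable (fun x => h x) μ := fun h =>
    h.continuous.integrable_of_hasCompactSupport (HasCompactSupport.of_compactSpace _)
  have main : ∀ (f : C(X,ℝ)), (∀ x, 0 ≤ f x) → ∫ x, f x ∂μ = Λ f := by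
    intro f hf0
    have key : ∀ ε : ℝ, 0 < ε → |Λ f - ∫ x, f x ∂μ| ≤ ε := by
      intro ε hε
      set N := ⌈‖f‖ / ε⌉₊ + 1 with hN
      have hNf : ∀ x, f x ≤ (N:ℝ) * ε := by
        intro x
        have h1 : f x ≤ ‖f‖ := (abs_le.1 (f.norm_coe_le_norm x)).2
        have h2 : ‖f‖ / ε ≤ (⌈‖f‖/ε⌉₊ : ℝ) := Nat.le_ceil _
        have h3 : ‖f‖ ≤ (⌈‖f‖/ε⌉₊:ℝ) * ε := by rwa [div_le_iff₀ hε] at h2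
        have h4 : ((⌈‖f‖/ε⌉₊:ℕ):ℝ) * ε ≤ (N:ℝ)*ε := by
          apply mul_le_mul_of_nonneg_right _ hε.le
          rw [hN]; push_cast; linarith
        linarith
      set K : ℕ → Set X := fun i => {x | (i:ℝ)*ε ≤ f x} with hKdef
      have hKcl : ∀ i, IsClosed (K i) := fun i => isClosed_le continuous_const f.continuous
      have hKmeas : ∀ i, MeasurableSet (K i) := fun i => (hKcl i).measurableSet
      have hm_eq : ∀ i, (μ (K i)).toReal = lamR Λ (K i) := fun i => by
        rw [hK _ (hKcl i), ENNReal.toReal_ofReal (lamR_nonneg hpos _)]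
      have hm0 : ∀ i, 0 ≤ (μ (K i)).toReal := fun i => ENNReal.toReal_nonneg
      have hm1 : ∀ i, (μ (K i)).toReal ≤ 1 := fun i => by
        have h := prob_le_one (μ := μ) (s := K i)
        have := ENNReal.toReal_mono one_ne_top h
        simpa using this
      set g : ℕ → C(X,ℝ) := fun i => ⟨fun x => min (max (f x - (i:ℝ)*ε) 0) ε,
        ((f.continuous.sub continuous_const).max continuous_const).min continuous_const⟩
        with hgdef
      have hgapp : ∀ i x, g i x = min (max (f x - (i:ℝ)*ε) 0) ε := fun i x => rfl
      have hg0 : ∀ i x, 0 ≤ g i x := fun i x => le_min (le_max_right _ _) hε.le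
      have hgK : ∀ i, ∀ x ∈ K (i+1), g i x = ε := by
        intro i x hx
        have hx' : ((i:ℝ)+1)*ε ≤ f x := by
          have h : ((i+1:ℕ):ℝ)*ε ≤ f x := hx
          push_cast at h
          exact h
        have hh : ((i:ℝ)+1)*ε = (i:ℝ)*ε + ε := by ring
        rw [hgapp, max_eq_left (by linarith), min_eq_right (by linarith)]
      have hgnotK : ∀ i, ∀ x, x ∉ K i → g i x = 0 := by
        intro i x hx
        have hx' : f x < (i:ℝ)*ε := by
          have h : ¬ ((i:ℝ)*ε ≤ f x) := hx
          linarith [not_le.1 h]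
        rw [hgapp, max_eq_right (by linarith), min_eq_left hε.le]
      have hΛub : ∀ i, Λ (g i) ≤ ε * (μ (K i)).toReal := by
        intro i
        rw [hm_eq]
        have hd : Λ (g i) / ε ≤ lamR Λ (K i) := by
          refine le_csInf (testVals_nonempty _) ?_
          rintro b ⟨t, ht, rfl⟩
          rw [div_le_iff₀ hε]
          have hpt : ∀ x, g i x ≤ (ε • t) x := by
            intro x
            simp only [ContinuousMap.smul_apply, smul_eq_mul]
            by_cases hx : x ∈ K i
            · have h1 := ht.2 x hx
              have h2 := min_le_right (max (f x - (i:ℝ)*ε) 0) ε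
              rw [hgapp]
              nlinarith
            · rw [hgnotK i x hx]
              exact mul_nonneg hε.le (ht.1 x)
          have h3 := lam_mono hpos hpt
          rwa [_root_.map_smul, smul_eq_mul, mul_comm] at h3
        have h4 := (div_le_iff₀ hε).1 hd
        have h5 : ε * lamR Λ (K i) = lamR Λ (K i) * ε := mul_comm _ _
        linarith
      have hΛlb : ∀ i, ε * (μ (K (i+1))).toReal ≤ Λ (g i) := by
        intro i
        rw [hm_eq]
        have hmem : (ε⁻¹ • g i) ∈ testSet (K (i+1)) := by
          constructor
          · intro x
            simp only [ContinuousMap.smul_apply, smul_eq_mul]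
            exact mul_nonneg (inv_nonneg.2 hε.le) (hg0 i x)
          · intro x hx
            simp only [ContinuousMap.smul_apply, smul_eq_mul]
            rw [hgK i x hx, inv_mul_cancel₀ hε.ne']
        have h1 := lamR_le hpos hmem
        rw [_root_.map_smul, smul_eq_mul] at h1
        have h2 := mul_le_mul_of_nonneg_left h1 hε.le
        rwa [mul_inv_cancel_left₀ hε.ne'] at h2
      have hind : ∀ i, Integrable ((K i).indicator fun _ => ε) μ := fun i =>
        (integrable_indicator_iff (hKmeas i)).2 (integrableOn_const (measure_lt_top μ _).ne)
      have hIub : ∀ i, ∫ x, g i x ∂μ ≤ ε * (μ (K i)).toReal := by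
        intro i
        have hle : ∀ x, g i x ≤ (K i).indicator (fun _ => ε) x := by
          intro x
          by_cases hx : x ∈ K i
          · rw [Set.indicator_of_mem hx]
            exact min_le_right _ _
          · rw [Set.indicator_of_notMem hx, hgnotK i x hx]
        have h1 := integral_mono (hint (g i)) (hind i) hle
        rw [integral_indicator_const _ (hKmeas i), smul_eq_mul, measureReal_def] at h1
        have h5 : ε * (μ (K i)).toReal = (μ (K i)).toReal * ε := mul_comm _ _
        linarith
      have hIlb : ∀ i, ε * (μ (K (i+1))).toReal ≤ ∫ x, g i x ∂μ := by
        intro i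
        have hle : ∀ x, (K (i+1)).indicator (fun _ => ε) x ≤ g i x := by
          intro x
          by_cases hx : x ∈ K (i+1)
          · rw [Set.indicator_of_mem hx, hgK i x hx]
          · rw [Set.indicator_of_notMem hx]
            exact hg0 i x
        have h1 := integral_mono (hind (i+1)) (hint (g i)) hle
        rw [integral_indicator_const _ (hKmeas (i+1)), smul_eq_mul, measureReal_def] at h1
        have h5 : ε * (μ (K (i+1))).toReal = (μ (K (i+1))).toReal * ε := mul_comm _ _
        linarith
      have hfsum : f = ∑ i ∈ Finset.range N, g i := by
        ext x
        rw [ContinuousMap.sum_apply]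
        simp only [hgapp]
        rw [stair_sum ε hε.le (f x) (hf0 x) N, min_eq_left (hNf x)]
      have hΛsum : Λ f = ∑ i ∈ Finset.range N, Λ (g i) := by
        conv_lhs => rw [hfsum]
        exact map_sum Λ _ _
      have hIsum : ∫ x, f x ∂μ = ∑ i ∈ Finset.range N, ∫ x, g i x ∂μ := by
        have h1 : ∫ x, f x ∂μ = ∫ x, (∑ i ∈ Finset.range N, g i) x ∂μ := by
          conv_lhs => rw [hfsum]
        rw [h1]
        simp_rw [ContinuousMap.sum_apply]
        exact integral_finset_sum _ (fun i _ => hint (g i))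
      have hS : ∑ i ∈ Finset.range N, (μ (K i)).toReal
          ≤ ∑ i ∈ Finset.range N, (μ (K (i+1))).toReal + 1 := by
        have h1 := Finset.sum_range_succ' (fun i => (μ (K i)).toReal) N
        have h2 := Finset.sum_range_succ (fun i => (μ (K i)).toReal) N
        have h3 := hm1 0
        have h4 := hm0 N
        rw [h2] at h1
        linarith
      have hΛ1 : Λ f ≤ ε * ∑ i ∈ Finset.range N, (μ (K i)).toReal := by
        rw [hΛsum, Finset.mul_sum]
        exact Finset.sum_le_sum (fun i _ => hΛub i)
      have hΛ2 : ε * ∑ i ∈ Finset.range N, (μ (K (i+1))).toReal ≤ Λ f := by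
        rw [hΛsum, Finset.mul_sum]
        exact Finset.sum_le_sum (fun i _ => hΛlb i)
      have hI1 : ∫ x, f x ∂μ ≤ ε * ∑ i ∈ Finset.range N, (μ (K i)).toReal := by
        rw [hIsum, Finset.mul_sum]
        exact Finset.sum_le_sum (fun i _ => hIub i)
      have hI2 : ε * ∑ i ∈ Finset.range N, (μ (K (i+1))).toReal ≤ ∫ x, f x ∂μ := by
        rw [hIsum, Finset.mul_sum]
        exact Finset.sum_le_sum (fun i _ => hIlb i)
      have hw : ε * ∑ i ∈ Finset.range N, (μ (K i)).toReal
          ≤ ε * ∑ i ∈ Finset.range N, (μ (K (i+1))).toReal + ε := by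
        have h1 := mul_le_mul_of_nonneg_left hS hε.le
        have h2 : ε * (∑ i ∈ Finset.range N, (μ (K (i+1))).toReal + 1)
            = ε * ∑ i ∈ Finset.range N, (μ (K (i+1))).toReal + ε := by ring
        linarith
      rw [abs_le]
      constructor <;> linarith
    have h0 : |Λ f - ∫ x, f x ∂μ| ≤ 0 :=
      le_of_forall_pos_le_add (fun ε hε => by simpa using key ε hε)
    have h1 := abs_nonneg (Λ f - ∫ x, f x ∂μ)
    have h2 : Λ f - ∫ x, f x ∂μ = 0 := abs_eq_zero.1 (le_antisymm h0 h1)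
    linarith
  set c := ‖f‖ with hc
  have hnn : ∀ x, 0 ≤ (f + c • (1:C(X,ℝ))) x := fun x => by
    simp only [ContinuousMap.add_apply, ContinuousMap.smul_apply, ContinuousMap.one_apply,
      smul_eq_mul, mul_one]
    have := (abs_le.1 (f.norm_coe_le_norm x)).1
    linarith
  have h := main (f + c • 1) hnn
  have hL : ∫ x, (f + c • (1:C(X,ℝ))) x ∂μ = (∫ x, f x ∂μ) + c := by
    simp only [ContinuousMap.add_apply, ContinuousMap.smul_apply, ContinuousMap.one_apply,
      smul_eq_mul, mul_one]
    rw [integral_add (hint f) (integrable_const c), integral_const]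
    simp [measure_univ]
  have hR : Λ (f + c • 1) = Λ f + c := by
    rw [map_add, _root_.map_smul, hone, smul_eq_mul, mul_one]
  rw [hL, hR] at h
  linarith

include hpos hone in
/-- Riesz-Markov-Kakutani for compact metric spaces, probability version. -/
theorem exists_rep : ∃ μ : Measure X, IsProbabilityMeasure μ ∧
    ∀ f : C(X,ℝ), ∫ x, f x ∂μ = Λ f := by
  refine ⟨(rieszCont hpos).measure, rieszMeasure_prob hpos hone, ?_⟩
  have : IsProbabilityMeasure ((rieszCont hpos).measure) := rieszMeasure_prob hpos hone
  exact integral_eq_lam hpos hone _ (fun K hK => rieszMeasure_closed hpos hone K hK)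

end RMK

section PartB

open Topology NNReal ENNReal

set_option linter.unusedSectionVars false

lemma cont_integrable (μ : Measure X) [IsFiniteMeasure μ] (h : C(X,ℝ)) :
    Integrable (fun x => h x) μ :=
  h.continuous.integrable_of_hasCompactSupport (HasCompactSupport.of_compactSpace _)

/-- integration against a probability measure, as an element of the weak dual. -/
noncomputable def intF (μ : ProbabilityMeasure X) : WeakDual ℝ C(X,ℝ) :=
  StrongDual.toWeakDual (LinearMap.mkContinuous
    { toFun := fun f : C(X,ℝ) => ∫ x, f x ∂(μ : Measure X)
      map_add' := fun f g => integral_add (cont_integrable _ f) (cont_integrable _ g)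
      map_smul' := fun c f => by simpa using integral_smul c (fun x => f x) } 1
    (by
      intro f
      rw [one_mul]
      have h1 : ∀ x, ‖f x‖ ≤ ‖f‖ := fun x => f.norm_coe_le_norm x
      have h2 := norm_integral_le_of_norm_le_const (μ := (μ : Measure X))
        (f := fun x => f x) (C := ‖f‖) (Filter.Eventually.of_forall h1)
      simpa using h2))

lemma intF_apply (μ : ProbabilityMeasure X) (f : C(X,ℝ)) :
    intF μ f = ∫ x, f x ∂(μ : Measure X) := rfl

variable (T : X → X) (hT : Continuous T)

/-- the set of positive normalized `T`-invariant functionals. -/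
def Dset : Set (WeakDual ℝ C(X,ℝ)) :=
  {L | (∀ h : C(X,ℝ), (∀ x, 0 ≤ h x) → 0 ≤ L h) ∧ L 1 = 1 ∧
    ∀ h : C(X,ℝ), L (h.comp ⟨T, hT⟩) = L h}

variable {T}

lemma mem_Dset_abs {L : WeakDual ℝ C(X,ℝ)} (hL : L ∈ Dset T hT) (h : C(X,ℝ)) :
    |L h| ≤ ‖h‖ := by
  have hub : L h ≤ ‖h‖ := by
    have := lam_mono (Λ := L) hL.1 (f := h) (g := ‖h‖ • 1) (fun x => by
      simp only [ContinuousMap.smul_apply, ContinuousMap.one_apply, smul_eq_mul, mul_one]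
      exact (abs_le.1 (h.norm_coe_le_norm x)).2)
    rwa [_root_.map_smul, hL.2.1, smul_eq_mul, mul_one] at this
  have hlb : -‖h‖ ≤ L h := by
    have := lam_mono (Λ := L) hL.1 (f := (-‖h‖) • 1) (g := h) (fun x => by
      simp only [ContinuousMap.smul_apply, ContinuousMap.one_apply, smul_eq_mul, mul_one]
      exact (abs_le.1 (h.norm_coe_le_norm x)).1)
    rwa [_root_.map_smul, hL.2.1, smul_eq_mul, mul_one] at this
  exact abs_le.2 ⟨hlb, hub⟩

lemma isCompact_Dset : IsCompact (Dset T hT) := by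
  apply WeakDual.isCompact_of_bounded_of_closed
  · apply Bornology.IsBounded.subset
      (Metric.isBounded_closedBall (x := (0 : StrongDual ℝ C(X,ℝ))) (r := 1))
    intro C hC
    rw [Metric.mem_closedBall]
    refine (dist_zero_right C).le.trans ?_
    refine ContinuousLinearMap.opNorm_le_bound _ zero_le_one (fun h => ?_)
    rw [one_mul]
    have h3 : |(StrongDual.toWeakDual C) h| ≤ ‖h‖ := mem_Dset_abs hT hC h
    simpa [Real.norm_eq_abs] using h3
  · have heq : Dset T hT =
        (⋂ (h : C(X,ℝ)) (_ : ∀ x, 0 ≤ h x), {L : WeakDual ℝ C(X,ℝ) | 0 ≤ L h}) ∩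
        ({L : WeakDual ℝ C(X,ℝ) | L 1 = 1} ∩
        ⋂ (h : C(X,ℝ)), {L : WeakDual ℝ C(X,ℝ) | L (h.comp ⟨T, hT⟩) = L h}) := by
      ext L
      simp only [Dset, Set.mem_setOf_eq, Set.mem_inter_iff, Set.mem_iInter]
    rw [heq]
    refine IsClosed.inter ?_ (IsClosed.inter ?_ ?_)
    · exact isClosed_iInter fun h => isClosed_iInter fun _ =>
        isClosed_le continuous_const (WeakDual.eval_continuous h)
    · exact isClosed_eq (WeakDual.eval_continuous 1) continuous_const
    · exact isClosed_iInter fun h =>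
        isClosed_eq (WeakDual.eval_continuous _) (WeakDual.eval_continuous h)

lemma intF_mem_Dset {μ : ProbabilityMeasure X} (hμ : μ ∈ invMeasures T) :
    intF μ ∈ Dset T hT := by
  refine ⟨fun h hh => ?_, ?_, fun h => ?_⟩
  · rw [intF_apply]
    exact integral_nonneg hh
  · rw [intF_apply]
    simp
  · rw [intF_apply, intF_apply]
    have hμ' : MeasurePreserving T (μ : Measure X) (μ : Measure X) := hμ
    calc ∫ x, (h.comp ⟨T, hT⟩) x ∂(μ : Measure X) = ∫ x, h (T x) ∂(μ : Measure X) := rfl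
      _ = ∫ y, h y ∂(Measure.map T (μ : Measure X)) :=
          (integral_map hT.aemeasurable h.continuous.aestronglyMeasurable).symm
      _ = ∫ y, h y ∂(μ : Measure X) := by rw [hμ'.map_eq]

lemma exists_of_mem_Dset {L : WeakDual ℝ C(X,ℝ)} (hL : L ∈ Dset T hT) :
    ∃ μ : ProbabilityMeasure X, μ ∈ invMeasures T ∧
      ∀ f : C(X,ℝ), ∫ x, f x ∂(μ : Measure X) = L f := by
  obtain ⟨m, hm, hrep⟩ := exists_rep hL.1 hL.2.1
  have hmap : Measure.map T m = m := by
    have hpm : IsProbabilityMeasure (Measure.map T m) :=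
      Measure.isProbabilityMeasure_map hT.aemeasurable
    apply ext_of_forall_lintegral_eq_of_IsFiniteMeasure
    intro f
    have hfm : Measurable fun x => ((f x : ℝ≥0) : ℝ≥0∞) :=
      f.continuous.measurable.coe_nnreal_ennreal
    rw [lintegral_map hfm hT.measurable]
    set F1 : C(X,ℝ) := ⟨fun x => (f x : ℝ), NNReal.continuous_coe.comp f.continuous⟩ with hF1
    have e1 : ∫⁻ x, (f (T x)) ∂m = ENNReal.ofReal (∫ x, ((f (T x) : ℝ)) ∂m) :=
      lintegral_coe_eq_integral (fun x => f (T x)) (cont_integrable m (F1.comp ⟨T,hT⟩))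
    have e2 : ∫⁻ x, f x ∂m = ENNReal.ofReal (∫ x, ((f x : ℝ)) ∂m) :=
      lintegral_coe_eq_integral _ (cont_integrable m F1)
    rw [e1, e2]
    congr 1
    calc ∫ x, ((f (T x)):ℝ) ∂m = L (F1.comp ⟨T,hT⟩) := hrep (F1.comp ⟨T,hT⟩)
      _ = L F1 := hL.2.2 F1
      _ = ∫ x, ((f x):ℝ) ∂m := (hrep F1).symm
  exact ⟨⟨m, hm⟩, ⟨hT.measurable, hmap⟩, fun f => hrep f⟩

lemma image_eq (h : C(X,ℝ)) :
    (fun μ : ProbabilityMeasure X => ∫ x, h x ∂(μ : Measure X)) '' invMeasures T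
      = (fun L : WeakDual ℝ C(X,ℝ) => L h) '' Dset T hT := by
  ext r
  constructor
  · rintro ⟨μ, hμ, rfl⟩
    exact ⟨intF μ, intF_mem_Dset hT hμ, rfl⟩
  · rintro ⟨L, hL, rfl⟩
    obtain ⟨μ, hμ, hrep⟩ := exists_of_mem_Dset hT hL
    exact ⟨μ, hμ, hrep h⟩

lemma beta_eq (h : C(X,ℝ)) :
    beta T ⇑h = sSup ((fun L : WeakDual ℝ C(X,ℝ) => L h) '' Dset T hT) :=
  congrArg sSup (image_eq hT h)

lemma maxInts_eq (f g : C(X,ℝ)) :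
    maxInts T ⇑f ⇑g = (fun L : WeakDual ℝ C(X,ℝ) => L g) ''
      (Dset T hT ∩ {L : WeakDual ℝ C(X,ℝ) | L f = beta T ⇑f}) := by
  ext r
  constructor
  · rintro ⟨μ, ⟨hμinv, hμmax⟩, rfl⟩
    exact ⟨intF μ, ⟨intF_mem_Dset hT hμinv, hμmax⟩, rfl⟩
  · rintro ⟨L, ⟨hLD, hLmax⟩, rfl⟩
    obtain ⟨μ, hμ, hrep⟩ := exists_of_mem_Dset hT hLD
    exact ⟨μ, ⟨hμ, by rw [hrep f]; exact hLmax⟩, hrep g⟩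

end PartB

theorem stmt9 [Nonempty X] (T : X → X) (hT : Continuous T) (f g : C(X, ℝ)) :
    Filter.Tendsto (fun τ : ℝ => (beta T ⇑(f + τ • g) - beta T ⇑f) / τ)
      (nhdsWithin 0 (Set.Iio 0)) (nhds (sInf (maxInts T ⇑f ⇑g))) := by
  by_cases hne : (invMeasures T).Nonempty
  case neg =>
    have h0 : invMeasures T = ∅ := Set.not_nonempty_iff_eq_empty.1 hne
    have hbeta : ∀ h : X → ℝ, beta T h = 0 := fun h => by
      rw [beta, h0, Set.image_empty, Real.sSup_empty]
    have hmax : Mmax T ⇑f = ∅ := by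
      ext μ
      simp [Mmax, h0]
    have hmi : maxInts T ⇑f ⇑g = ∅ := by rw [maxInts, hmax, Set.image_empty]
    rw [hmi, Real.sInf_empty]
    apply Filter.Tendsto.congr (f₁ := fun _ : ℝ => (0:ℝ))
    · intro τ
      rw [hbeta, hbeta]
      simp
    · exact tendsto_const_nhds
  case pos =>
    have hDne : (Dset T hT).Nonempty := by
      obtain ⟨μ, hμ⟩ := hne
      exact ⟨intF μ, intF_mem_Dset hT hμ⟩
    have hcomp : IsCompact (Dset T hT) := isCompact_Dset hT
    have evalc : ∀ h : C(X,ℝ), Continuous fun L : WeakDual ℝ C(X,ℝ) => L h :=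
      fun h => WeakDual.eval_continuous h
    have hbddA : ∀ h : C(X,ℝ), BddAbove ((fun L : WeakDual ℝ C(X,ℝ) => L h) '' Dset T hT) :=
      fun h => (hcomp.image (evalc h)).bddAbove
    obtain ⟨L₀, hL₀D, hL₀max⟩ := hcomp.exists_isMaxOn hDne (evalc f).continuousOn
    have hbeta_eq : beta T ⇑f = L₀ f := by
      rw [beta_eq hT f]
      exact IsGreatest.csSup_eq ⟨⟨L₀, hL₀D, rfl⟩, by rintro r ⟨L, hL, rfl⟩; exact hL₀max hL⟩
    have hLleβ : ∀ L ∈ Dset T hT, L f ≤ beta T ⇑f := by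
      intro L hL
      have := le_csSup (hbddA f) ⟨L, hL, rfl⟩
      rwa [← beta_eq hT f] at this
    set Dm := Dset T hT ∩ {L : WeakDual ℝ C(X,ℝ) | L f = beta T ⇑f} with hDmdef
    have hDmne : Dm.Nonempty := ⟨L₀, hL₀D, hbeta_eq.symm⟩
    have hDmcomp : IsCompact Dm :=
      hcomp.inter_right (isClosed_eq (evalc f) continuous_const)
    have hmaxints : maxInts T ⇑f ⇑g = (fun L : WeakDual ℝ C(X,ℝ) => L g) '' Dm :=
      maxInts_eq hT f g
    have hMIne : (maxInts T ⇑f ⇑g).Nonempty := by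
      rw [hmaxints]; exact hDmne.image _
    have hMIbdd : BddBelow (maxInts T ⇑f ⇑g) := by
      rw [hmaxints]; exact (hDmcomp.image (evalc g)).bddBelow
    have hupper : ∀ τ : ℝ, τ < 0 →
        (beta T ⇑(f + τ • g) - beta T ⇑f) / τ ≤ sInf (maxInts T ⇑f ⇑g) := by
      intro τ hτ
      refine le_csInf hMIne ?_
      intro r hr
      rw [hmaxints] at hr
      obtain ⟨L, hLDm, rfl⟩ := hr
      have h1 : L (f + τ • g) ≤ beta T ⇑(f + τ • g) := by
        have := le_csSup (hbddA (f + τ • g)) ⟨L, hLDm.1, rfl⟩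
        rwa [← beta_eq hT (f + τ • g)] at this
      have h2 : L (f + τ • g) = beta T ⇑f + τ * L g := by
        rw [map_add, _root_.map_smul, smul_eq_mul, hLDm.2]
      rw [div_le_iff_of_neg hτ]
      have hcm : τ * L g = L g * τ := mul_comm _ _
      linarith
    have hlower : ∀ ε : ℝ, 0 < ε → ∃ δ > 0, ∀ τ : ℝ, -δ < τ → τ < 0 →
        sInf (maxInts T ⇑f ⇑g) - ε ≤ (beta T ⇑(f + τ • g) - beta T ⇑f) / τ := by
      intro ε hε
      have hη : ∃ η > 0, ∀ L ∈ Dset T hT, beta T ⇑f - η < L f →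
          sInf (maxInts T ⇑f ⇑g) - ε < L g := by
        by_contra hcon
        push_neg at hcon
        set C := Dset T hT ∩ {L : WeakDual ℝ C(X,ℝ) | L g ≤ sInf (maxInts T ⇑f ⇑g) - ε}
          with hCdef
        have hCcomp : IsCompact C :=
          hcomp.inter_right (isClosed_le (evalc g) continuous_const)
        have hCne : C.Nonempty := by
          obtain ⟨L, hLD, _, hLg⟩ := hcon 1 one_pos
          exact ⟨L, hLD, hLg⟩
        obtain ⟨L₁, hL₁C, hL₁max⟩ := hCcomp.exists_isMaxOn hCne (evalc f).continuousOn
        have hL₁β : L₁ f = beta T ⇑f := by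
          refine le_antisymm (hLleβ L₁ hL₁C.1) ?_
          by_contra hlt
          push_neg at hlt
          obtain ⟨L, hLD, hLf, hLg⟩ := hcon (beta T ⇑f - L₁ f) (by linarith)
          have hLC : L ∈ C := ⟨hLD, hLg⟩
          have h5 : L f ≤ L₁ f := hL₁max hLC
          linarith
        have hin : L₁ g ∈ maxInts T ⇑f ⇑g := by
          rw [hmaxints]
          exact ⟨L₁, ⟨hL₁C.1, hL₁β⟩, rfl⟩
        have hge := csInf_le hMIbdd hin
        have hle := hL₁C.2
        simp only [Set.mem_setOf_eq] at hle
        linarith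
      obtain ⟨η, hηpos, hηprop⟩ := hη
      refine ⟨η / (‖g‖ + |sInf (maxInts T ⇑f ⇑g) - ε| + 1), by positivity, ?_⟩
      intro τ hτl hτ0
      set Li := sInf (maxInts T ⇑f ⇑g) with hLidef
      have hβτ : beta T ⇑(f + τ • g) ≤ beta T ⇑f + τ * (Li - ε) := by
        rw [beta_eq hT (f + τ • g)]
        refine csSup_le (by
          obtain ⟨L, hL⟩ := hDne
          exact ⟨L (f + τ • g), L, hL, rfl⟩) ?_
        rintro r ⟨L, hLD, rfl⟩
        have hval : L (f + τ • g) = L f + τ * L g := by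
          rw [map_add, _root_.map_smul, smul_eq_mul]
        by_cases hcase : beta T ⇑f - η < L f
        · have h1 := hηprop L hLD hcase
          have h2 := hLleβ L hLD
          have h3 : τ * L g ≤ τ * (Li - ε) := mul_le_mul_of_nonpos_left h1.le hτ0.le
          linarith
        · push_neg at hcase
          have h1 : |L g| ≤ ‖g‖ := mem_Dset_abs hT hLD g
          have h2 : τ * L g ≤ -τ * ‖g‖ := by
            calc τ * L g ≤ |τ * L g| := le_abs_self _
              _ = |τ| * |L g| := abs_mul _ _
              _ ≤ |τ| * ‖g‖ := mul_le_mul_of_nonneg_left h1 (abs_nonneg τ)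
              _ = -τ * ‖g‖ := by rw [abs_of_neg hτ0]
          have h4 : -(τ * (Li - ε)) ≤ -τ * |Li - ε| := by
            calc -(τ * (Li - ε)) ≤ |τ * (Li - ε)| := neg_le_abs _
              _ = |τ| * |Li - ε| := abs_mul _ _
              _ = -τ * |Li - ε| := by rw [abs_of_neg hτ0]
          have h3 : -τ * (‖g‖ + |Li - ε|) ≤ η := by
            have hτb : -τ < η / (‖g‖ + |Li - ε| + 1) := by linarith
            have hgpos : (0:ℝ) ≤ ‖g‖ + |Li - ε| := by positivity
            have hd : (0:ℝ) < ‖g‖ + |Li - ε| + 1 := by positivity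
            calc -τ * (‖g‖ + |Li - ε|)
                ≤ (η / (‖g‖ + |Li - ε| + 1)) * (‖g‖ + |Li - ε|) :=
                  mul_le_mul_of_nonneg_right hτb.le hgpos
              _ ≤ η := by
                  rw [div_mul_eq_mul_div, div_le_iff₀ hd]
                  nlinarith
          nlinarith
      rw [le_div_iff_of_neg hτ0]
      have hcm : τ * (Li - ε) = (Li - ε) * τ := mul_comm _ _
      linarith
    rw [Metric.tendsto_nhdsWithin_nhds]
    intro ε hε
    obtain ⟨δ, hδpos, hδ⟩ := hlower (ε/2) (half_pos hε)
    refine ⟨δ, hδpos, ?_⟩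
    intro τ hτmem hτdist
    have hτ0 : τ < 0 := hτmem
    have habs : |τ| < δ := by simpa [Real.dist_eq] using hτdist
    have hτl : -δ < τ := by
      have := abs_lt.1 habs
      linarith [this.1]
    have h1 := hupper τ hτ0
    have h2 := hδ τ hτl hτ0
    rw [Real.dist_eq, abs_lt]
    constructor
    · linarith
    · linarith
end
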